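/- The encoding of the ring-to-star rule admits spurious rewritings on an 8-cycle: with A_i as in the ring-to-star example (contracts a_i(n,m,x) = ( f_{i⊞1}(x,m) ∧ s_{i⊟1}(x,n) ) ↠ ( f_i(x,n) ∧ s_i(x,m) ), indices modulo 4), and pairwise distinct names n_1,…,n_8, the length-8 loop P = A_1(n_1,n_2) | A_2(n_2,n_3) | A_3(n_3,n_4) | A_4(n_4,n_5) | A_1(n_5,n_6) | A_2(n_6,n_7) | A_3(n_7,n_8) | A_4(n_8,n_1) can perform a ↣-transition, in which all eight session variables are fused to a single fresh name. -/

import Mathlib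

namespace Contracts

/-! ### Names, variables, substitutions -/

abbrev Name : Type := ℕ
abbrev Var : Type := ℕ
/-- Atoms: either names (`inl`) or variables (`inr`). -/
abbrev Atom : Type := Name ⊕ Var

/-- A substitution maps variables to atoms (names or variables). -/
abbrev Subst : Type := Var → Atom

def substAtom (σ : Subst) : Atom → Atom
  | .inl n => .inl n
  | .inr x => σ x

/-- The fusion `{x̄ → n}` replacing each variable in `V` by the name `n`. -/
def fuseSubst (V : Finset Var) (n : Name) : Subst := fun y =>
  if y ∈ V then .inl n else .inr y

/-- The substitution `{n/x}`. -/
def singleSubst (x : Var) (n : Name) : Subst := fun y =>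
  if y = x then .inl n else .inr y

/-- Transposition of two atoms (for alpha conversion). -/
def swapAtom (a b : Atom) : Atom → Atom := fun c =>
  if c = a then b else if c = b then a else c

/-! ### Constraint systems (Def 2.1), with substitution/renaming/free-atom structure -/

structure ConstraintSystem where
  D : Type
  bot : D
  entails : Set D → D → Prop
  subst : Subst → D → D
  ren : (Atom → Atom) → D → D
  fv : D → Set Atom

namespace ConstraintSystem

/-- The laws (i)-(iii) of Def 2.1. -/
def Lawful (CS : ConstraintSystem) : Prop :=
  (∀ (C : Set CS.D) (c : CS.D), c ∈ C → CS.entails C c) ∧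
  (∀ (C C' : Set CS.D) (c : CS.D),
      (∀ c' ∈ C', CS.entails C c') → CS.entails C' c → CS.entails C c) ∧
  (∀ (C : Set CS.D) (c : CS.D), CS.entails C CS.bot → CS.entails C c)

def substSet (CS : ConstraintSystem) (σ : Subst) (C : Set CS.D) : Set CS.D :=
  CS.subst σ '' C

/-- Minimal fusion (Def 2.4): `C ⊢min_{ {V→n} } c`. -/
def MinFusion (CS : ConstraintSystem) (C : Set CS.D) (V : Finset Var) (n : Name)
    (c : CS.D) : Prop :=
  CS.entails (CS.substSet (fuseSubst V n) C) (CS.subst (fuseSubst V n) c) ∧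
  ∀ W : Finset Var, W ⊂ V →
    ¬ CS.entails (CS.substSet (fuseSubst W n) C) (CS.subst (fuseSubst W n) c)

/-- Local minimal fusion (Def 2.6): `C ⊢loc_σ c` iff `∃ C' ⊆ C, C' ⊢min_σ c`. -/
def LocMinFusion (CS : ConstraintSystem) (C : Set CS.D) (V : Finset Var) (n : Name)
    (c : CS.D) : Prop :=
  ∃ C' ⊆ C, CS.MinFusion C' V n c

end ConstraintSystem

/-! ### Process syntax -/

inductive Prefix (D : Type) : Type where
  | tau
  | tell (c : D)
  | check (c : D)
  | ask (c : D)
  | join (x : Var) (c : D)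
  | fuse (x : Var) (c : D)

/-- Processes.  Sums `Σ πᵢ.Pᵢ` are built from `nil` (the empty sum `0`), guarded
processes `act π P` (i.e. `π.P`) and binary `choice` (`+`). -/
inductive Proc (D : Type) : Type where
  | nil
  | con (c : D)
  | act (π : Prefix D) (P : Proc D)
  | choice (P Q : Proc D)
  | par (P Q : Proc D)
  | delim (a : Atom) (P : Proc D)
  | const (X : ℕ) (args : List Atom)

/-- Substitution on prefixes; note `(fuse_x c){n/x} = (join_x c){n/x} = ask (c{n/x})`. -/
def Prefix.substP (CS : ConstraintSystem) (σ : Subst) : Prefix CS.D → Prefix CS.D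
  | .tau => .tau
  | .tell c => .tell (CS.subst σ c)
  | .check c => .check (CS.subst σ c)
  | .ask c => .ask (CS.subst σ c)
  | .join x c =>
    match σ x with
    | .inl _ => .ask (CS.subst σ c)
    | .inr y => .join y (CS.subst σ c)
  | .fuse x c =>
    match σ x with
    | .inl _ => .ask (CS.subst σ c)
    | .inr y => .fuse y (CS.subst σ c)

/-- Mask a substitution on a bound atom. -/
def maskAtom (σ : Subst) : Atom → Subst
  | .inl _ => σ
  | .inr y => fun z => if z = y then .inr z else σ z

def Proc.subst (CS : ConstraintSystem) (σ : Subst) : Proc CS.D → Proc CS.D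
  | .nil => .nil
  | .con c => .con (CS.subst σ c)
  | .act π P => .act (π.substP CS σ) (P.subst CS σ)
  | .choice P Q => .choice (P.subst CS σ) (Q.subst CS σ)
  | .par P Q => .par (P.subst CS σ) (Q.subst CS σ)
  | .delim a P => .delim a (P.subst CS (maskAtom σ a))
  | .const X args => .const X (args.map (substAtom σ))

/-- Renaming of all atom occurrences (including binders), used for alpha conversion. -/
def Prefix.renP (CS : ConstraintSystem) (f : Atom → Atom) : Prefix CS.D → Prefix CS.D
  | .tau => .tau
  | .tell c => .tell (CS.ren f c)
  | .check c => .check (CS.ren f c)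
  | .ask c => .ask (CS.ren f c)
  | .join x c =>
    match f (.inr x) with
    | .inl _ => .ask (CS.ren f c)
    | .inr y => .join y (CS.ren f c)
  | .fuse x c =>
    match f (.inr x) with
    | .inl _ => .ask (CS.ren f c)
    | .inr y => .fuse y (CS.ren f c)

def Proc.ren (CS : ConstraintSystem) (f : Atom → Atom) : Proc CS.D → Proc CS.D
  | .nil => .nil
  | .con c => .con (CS.ren f c)
  | .act π P => .act (π.renP CS f) (P.ren CS f)
  | .choice P Q => .choice (P.ren CS f) (Q.ren CS f)
  | .par P Q => .par (P.ren CS f) (Q.ren CS f)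
  | .delim a P => .delim (f a) (P.ren CS f)
  | .const X args => .const X (args.map f)

def Prefix.fvP (CS : ConstraintSystem) : Prefix CS.D → Set Atom
  | .tau => ∅
  | .tell c => CS.fv c
  | .check c => CS.fv c
  | .ask c => CS.fv c
  | .join x c => insert (Sum.inr x) (CS.fv c)
  | .fuse x c => insert (Sum.inr x) (CS.fv c)

/-- Free atoms of a process. -/
def Proc.free (CS : ConstraintSystem) : Proc CS.D → Set Atom
  | .nil => ∅
  | .con c => CS.fv c
  | .act π P => π.fvP CS ∪ P.free CS
  | .choice P Q => P.free CS ∪ Q.free CS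
  | .par P Q => P.free CS ∪ Q.free CS
  | .delim a P => P.free CS \ {a}
  | .const _ args => {a | a ∈ args}

/-- All atoms of a process (including bound ones). -/
def Proc.atoms (CS : ConstraintSystem) : Proc CS.D → Set Atom
  | .nil => ∅
  | .con c => CS.fv c
  | .act π P => π.fvP CS ∪ P.atoms CS
  | .choice P Q => P.atoms CS ∪ Q.atoms CS
  | .par P Q => P.atoms CS ∪ Q.atoms CS
  | .delim a P => insert a (P.atoms CS)
  | .const _ args => {a | a ∈ args}

/-- Iterated delimitation `(a₁)…(aₖ)P`. -/
def delims {D : Type} (l : List Atom) (P : Proc D) : Proc D := l.foldr Proc.delim P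

/-- Parallel composition of a list of processes. -/
def parList {D : Type} (l : List (Proc D)) : Proc D := l.foldr Proc.par Proc.nil

/-- A set `C = {c₁, c₂, …}` of constraints used as a process `c₁ | c₂ | ⋯`. -/
def conList {D : Type} (C : List D) : Proc D := parList (C.map Proc.con)

/-- Environments of defining equations `X(x̄) ≐ P`. -/
abbrev Env (D : Type) : Type := ℕ → List Var × Proc D

def mkSubst (params : List Var) (args : List Atom) : Subst := fun z =>
  match params.findIdx? (fun w => w == z) with
  | some i => args.getD i (.inr z)
  | none => .inr z

def unfoldConst (CS : ConstraintSystem) (env : Env CS.D) (X : ℕ) (args : List Atom) :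
    Proc CS.D :=
  ((env X).2).subst CS (mkSubst (env X).1 args)

/-- Sums `Σ πᵢ.Pᵢ`. -/
def IsSum {D : Type} : Proc D → Prop
  | .nil => True
  | .act _ _ => True
  | .choice P Q => IsSum P ∧ IsSum Q
  | _ => False

/-- A process free from active (top-level) constraints. -/
def NoActiveCon {D : Type} : Proc D → Prop
  | .con _ => False
  | .par P Q => NoActiveCon P ∧ NoActiveCon Q
  | .delim _ P => NoActiveCon P
  | _ => True

/-- Every occurrence of a constant is guarded (behind a prefix). -/
def Guarded {D : Type} : Proc D → Prop
  | .const _ _ => False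
  | .act _ _ => True
  | .choice P Q => Guarded P ∧ Guarded Q
  | .par P Q => Guarded P ∧ Guarded Q
  | .delim _ P => Guarded P
  | _ => True

/-! ### Alpha conversion and structural equivalence -/

inductive AlphaEq (CS : ConstraintSystem) : Proc CS.D → Proc CS.D → Prop where
  | refl (P) : AlphaEq CS P P
  | symm {P Q} (h : AlphaEq CS P Q) : AlphaEq CS Q P
  | trans {P Q R} (h1 : AlphaEq CS P Q) (h2 : AlphaEq CS Q R) : AlphaEq CS P R
  | act {π P Q} (h : AlphaEq CS P Q) : AlphaEq CS (.act π P) (.act π Q)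
  | choice {P P' Q Q'} (h1 : AlphaEq CS P P') (h2 : AlphaEq CS Q Q') :
      AlphaEq CS (.choice P Q) (.choice P' Q')
  | par {P P' Q Q'} (h1 : AlphaEq CS P P') (h2 : AlphaEq CS Q Q') :
      AlphaEq CS (.par P Q) (.par P' Q')
  | delim {a P Q} (h : AlphaEq CS P Q) : AlphaEq CS (.delim a P) (.delim a Q)
  | rename {a b : Atom} {P : Proc CS.D} (h : b ∉ P.atoms CS) :
      AlphaEq CS (.delim a P) (.delim b (P.ren CS (swapAtom a b)))

/-- Structural equivalence `≡` (Sect. 2), on processes taken up to alpha-conversion. -/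
inductive StructEq (CS : ConstraintSystem) (env : Env CS.D) :
    Proc CS.D → Proc CS.D → Prop where
  | refl (P) : StructEq CS env P P
  | symm {P Q} (h : StructEq CS env P Q) : StructEq CS env Q P
  | trans {P Q R} (h1 : StructEq CS env P Q) (h2 : StructEq CS env Q R) :
      StructEq CS env P R
  | alpha {P Q} (h : AlphaEq CS P Q) : StructEq CS env P Q
  | parNil (P) : StructEq CS env (.par P .nil) P
  | parComm (P Q) : StructEq CS env (.par P Q) (.par Q P)
  | parAssoc (P Q R) : StructEq CS env (.par (.par P Q) R) (.par P (.par Q R))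
  | choiceNil (P) : StructEq CS env (.choice P .nil) P
  | choiceComm (P Q) : StructEq CS env (.choice P Q) (.choice Q P)
  | choiceAssoc (P Q R) :
      StructEq CS env (.choice (.choice P Q) R) (.choice P (.choice Q R))
  | scope {a : Atom} {P Q : Proc CS.D} (h : a ∉ P.free CS) :
      StructEq CS env (.delim a (.par P Q)) (.par P (.delim a Q))
  | delimSwap (a b : Atom) (P) :
      StructEq CS env (.delim a (.delim b P)) (.delim b (.delim a P))
  | unfold (X : ℕ) (args : List Atom) :
      StructEq CS env (.const X args) (unfoldConst CS env X args)
  | actCong {π P Q} (h : StructEq CS env P Q) :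
      StructEq CS env (.act π P) (.act π Q)
  | choiceCong {P P' Q Q'} (h1 : StructEq CS env P P') (h2 : StructEq CS env Q Q') :
      StructEq CS env (.choice P Q) (.choice P' Q')
  | parCong {P P' Q Q'} (h1 : StructEq CS env P P') (h2 : StructEq CS env Q Q') :
      StructEq CS env (.par P Q) (.par P' Q')
  | delimCong {a P Q} (h : StructEq CS env P Q) :
      StructEq CS env (.delim a P) (.delim a Q)

/-! ### Reduction semantics (Fig. 1) -/

inductive Red (CS : ConstraintSystem) (env : Env CS.D) : Proc CS.D → Proc CS.D → Prop where
  | tauR (as : List Atom) (P Q R : Proc CS.D) :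
      Red CS env (delims as (.par (.choice (.act .tau P) Q) R)) (delims as (.par P R))
  | tellR (as : List Atom) (c : CS.D) (P Q R : Proc CS.D) :
      Red CS env (delims as (.par (.choice (.act (.tell c) P) Q) R))
        (delims as (.par (.con c) (.par P R)))
  | askR (as : List Atom) (C : List CS.D) (c : CS.D) (P Q R : Proc CS.D)
      (h : CS.entails {d | d ∈ C} c) :
      Red CS env (delims as (.par (conList C) (.par (.choice (.act (.ask c) P) Q) R)))
        (delims as (.par (conList C) (.par P R)))
  | checkR (as : List Atom) (C : List CS.D) (c : CS.D) (P Q R : Proc CS.D)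
      (h1 : ¬ CS.entails (insert c {d | d ∈ C}) CS.bot) (h2 : NoActiveCon R) :
      Red CS env (delims as (.par (conList C) (.par (.choice (.act (.check c) P) Q) R)))
        (delims as (.par (conList C) (.par P R)))
  | fuseR (as : List Atom) (vs : Finset Var) (x : Var) (n : Name) (C : List CS.D)
      (c : CS.D) (P Q R : Proc CS.D) (hx : x ∈ vs)
      (hfresh : (Sum.inl n : Atom) ∉ P.free CS ∧ (Sum.inl n : Atom) ∉ Q.free CS ∧
        (Sum.inl n : Atom) ∉ R.free CS ∧ (∀ d ∈ C, (Sum.inl n : Atom) ∉ CS.fv d) ∧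
        (Sum.inl n : Atom) ∉ CS.fv c ∧ (Sum.inl n : Atom) ∉ as)
      (hmin : CS.MinFusion {d | d ∈ C} vs n c) :
      Red CS env
        (delims (vs.toList.map (Sum.inr : Var → Atom) ++ as)
          (.par (conList C) (.par (.choice (.act (.fuse x c) P) Q) R)))
        (delims (Sum.inl n :: as)
          ((Proc.par (conList C) (.par P R)).subst CS (fuseSubst vs n)))
  | joinR (as : List Atom) (x : Var) (n : Name) (C : List CS.D) (c : CS.D)
      (P Q R : Proc CS.D)
      (h : CS.entails (CS.substSet (singleSubst x n) {d | d ∈ C})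
             (CS.subst (singleSubst x n) c)) :
      Red CS env
        (delims (Sum.inr x :: Sum.inl n :: as)
          (.par (conList C) (.par (.choice (.act (.join x c) P) Q) R)))
        (delims (Sum.inl n :: as)
          ((Proc.par (conList C) (.par P R)).subst CS (singleSubst x n)))
  | structR {P P' Q Q' : Proc CS.D} (h1 : StructEq CS env P P')
      (h2 : Red CS env P' Q') (h3 : StructEq CS env Q' Q) : Red CS env P Q

/-! ### Actions and the labelled transition semantics (Fig. 2) -/

inductive BAct (D : Type) where
  | tau
  | constr (C : Set D)
  | askA (C : Set D) (c : D)
  | fuseA (C : Set D) (x : Var) (c : D)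
  | joinA (C : Set D) (x : Var) (c : D)
  | checkA (C : Set D)

/-- Actions `α ::= (ā) β` where `β` is a base action; the order of the
delimitations `(ā)` is neglected, as in the paper. -/
structure Act (D : Type) where
  binders : Finset Atom
  base : BAct D

def setFv (CS : ConstraintSystem) (C : Set CS.D) : Set Atom := ⋃ d ∈ C, CS.fv d

def BAct.fa (CS : ConstraintSystem) : BAct CS.D → Set Atom
  | .tau => ∅
  | .constr C => setFv CS C
  | .askA C c => setFv CS C ∪ CS.fv c
  | .fuseA C x c => setFv CS C ∪ CS.fv c ∪ {Sum.inr x}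
  | .joinA C x c => setFv CS C ∪ CS.fv c ∪ {Sum.inr x}
  | .checkA C => setFv CS C

def Act.fa (CS : ConstraintSystem) (α : Act CS.D) : Set Atom :=
  α.base.fa CS ∪ ↑α.binders

/-- No-capture side condition of the `Par*` rules: `ā` is fresh in `b̄`, the
tentative base action and `Q'`, while `b̄` is fresh in `C` and `P'`. -/
def SideCond (CS : ConstraintSystem) (A B : Finset Atom) (C : Set CS.D)
    (β : BAct CS.D) (P' Q' : Proc CS.D) : Prop :=
  (∀ a ∈ A, a ∉ B ∧ a ∉ β.fa CS ∧ a ∉ Q'.free CS) ∧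
  (∀ b ∈ B, b ∉ setFv CS C ∧ b ∉ P'.free CS)

inductive LTS (CS : ConstraintSystem) (env : Env CS.D) :
    Proc CS.D → Act CS.D → Proc CS.D → Prop where
  | tauA {P} : LTS CS env (.act .tau P) ⟨∅, .tau⟩ P
  | tellA {c P} : LTS CS env (.act (.tell c) P) ⟨∅, .tau⟩ (.par (.con c) P)
  | askA {c P} : LTS CS env (.act (.ask c) P) ⟨∅, .askA ∅ c⟩ P
  | checkA {c P} : LTS CS env (.act (.check c) P) ⟨∅, .checkA {c}⟩ P
  | fuseA {x c P} : LTS CS env (.act (.fuse x c) P) ⟨∅, .fuseA ∅ x c⟩ P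
  | joinA {x c P} : LTS CS env (.act (.join x c) P) ⟨∅, .joinA ∅ x c⟩ P
  | constrA {u} : LTS CS env (.con u) ⟨∅, .constr {u}⟩ (.con u)
  | idleSum {P} (h : IsSum P) : LTS CS env P ⟨∅, .constr ∅⟩ P
  | parConstr {P Q P' Q' : Proc CS.D} {A B : Finset Atom} {C C' : Set CS.D}
      (h1 : LTS CS env P ⟨A, .constr C⟩ P') (h2 : LTS CS env Q ⟨B, .constr C'⟩ Q')
      (hs : SideCond CS A B C (.constr C') P' Q') :
      LTS CS env (.par P Q) ⟨A ∪ B, .constr (C ∪ C')⟩ (.par P' Q')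
  | parAskL {P Q P' Q' A B C C' c}
      (h1 : LTS CS env P ⟨A, .constr C⟩ P') (h2 : LTS CS env Q ⟨B, .askA C' c⟩ Q')
      (hs : SideCond CS A B C (.askA C' c) P' Q') :
      LTS CS env (.par P Q) ⟨A ∪ B, .askA (C ∪ C') c⟩ (.par P' Q')
  | parAskR {P Q P' Q' A B C C' c}
      (h1 : LTS CS env P ⟨B, .askA C' c⟩ P') (h2 : LTS CS env Q ⟨A, .constr C⟩ Q')
      (hs : SideCond CS A B C (.askA C' c) Q' P') :
      LTS CS env (.par P Q) ⟨A ∪ B, .askA (C ∪ C') c⟩ (.par P' Q')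
  | parFuseL {P Q P' Q' A B C C' x c}
      (h1 : LTS CS env P ⟨A, .constr C⟩ P') (h2 : LTS CS env Q ⟨B, .fuseA C' x c⟩ Q')
      (hs : SideCond CS A B C (.fuseA C' x c) P' Q') :
      LTS CS env (.par P Q) ⟨A ∪ B, .fuseA (C ∪ C') x c⟩ (.par P' Q')
  | parFuseR {P Q P' Q' A B C C' x c}
      (h1 : LTS CS env P ⟨B, .fuseA C' x c⟩ P') (h2 : LTS CS env Q ⟨A, .constr C⟩ Q')
      (hs : SideCond CS A B C (.fuseA C' x c) Q' P') :
      LTS CS env (.par P Q) ⟨A ∪ B, .fuseA (C ∪ C') x c⟩ (.par P' Q')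
  | parJoinL {P Q P' Q' A B C C' x c}
      (h1 : LTS CS env P ⟨A, .constr C⟩ P') (h2 : LTS CS env Q ⟨B, .joinA C' x c⟩ Q')
      (hs : SideCond CS A B C (.joinA C' x c) P' Q') :
      LTS CS env (.par P Q) ⟨A ∪ B, .joinA (C ∪ C') x c⟩ (.par P' Q')
  | parJoinR {P Q P' Q' A B C C' x c}
      (h1 : LTS CS env P ⟨B, .joinA C' x c⟩ P') (h2 : LTS CS env Q ⟨A, .constr C⟩ Q')
      (hs : SideCond CS A B C (.joinA C' x c) Q' P') :
      LTS CS env (.par P Q) ⟨A ∪ B, .joinA (C ∪ C') x c⟩ (.par P' Q')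
  | parCheckL {P Q P' Q' A B C C'}
      (h1 : LTS CS env P ⟨A, .constr C⟩ P') (h2 : LTS CS env Q ⟨B, .checkA C'⟩ Q')
      (hs : SideCond CS A B C (.checkA C') P' Q') :
      LTS CS env (.par P Q) ⟨A ∪ B, .checkA (C ∪ C')⟩ (.par P' Q')
  | parCheckR {P Q P' Q' A B C C'}
      (h1 : LTS CS env P ⟨B, .checkA C'⟩ P') (h2 : LTS CS env Q ⟨A, .constr C⟩ Q')
      (hs : SideCond CS A B C (.checkA C') Q' P') :
      LTS CS env (.par P Q) ⟨A ∪ B, .checkA (C ∪ C')⟩ (.par P' Q')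
  | parTauL {P P' Q} (h : LTS CS env P ⟨∅, .tau⟩ P') :
      LTS CS env (.par P Q) ⟨∅, .tau⟩ (.par P' Q)
  | parTauR {P Q Q'} (h : LTS CS env Q ⟨∅, .tau⟩ Q') :
      LTS CS env (.par P Q) ⟨∅, .tau⟩ (.par P Q')
  | sumL {P Q α P'} (h : LTS CS env P α P') (hP : IsSum P)
      (hn : ∀ C, α.base ≠ .constr C) : LTS CS env (.choice P Q) α P'
  | sumR {P Q α Q'} (h : LTS CS env Q α Q') (hQ : IsSum Q)
      (hn : ∀ C, α.base ≠ .constr C) : LTS CS env (.choice P Q) α Q'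
  | defC {X args α P'} (h : LTS CS env (unfoldConst CS env X args) α P') :
      LTS CS env (.const X args) α P'
  | del {P α P' a} (h : LTS CS env P α P') (ha : a ∉ α.fa CS) :
      LTS CS env (.delim a P) α (.delim a P')
  | openB {P P' a} {A : Finset Atom} {β : BAct CS.D} (h : LTS CS env P ⟨A, β⟩ P') :
      LTS CS env (.delim a P) ⟨insert a A, β⟩ P'
  | closeAsk {P P'} {A : Finset Atom} {C : Set CS.D} {c}
      (h : LTS CS env P ⟨A, .askA C c⟩ P') (he : CS.entails C c) :
      LTS CS env P ⟨∅, .tau⟩ (delims A.toList P')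
  | closeFuse {P P'} {A : Finset Atom} {C : Set CS.D} {x c}
      (h : LTS CS env P ⟨A, .fuseA C x c⟩ P')
      (vs : Finset Var) (hx : x ∈ vs) (hvs : ∀ v ∈ vs, (Sum.inr v : Atom) ∈ A)
      (n : Name)
      (hfresh : (Sum.inl n : Atom) ∉ P'.free CS ∧ (Sum.inl n : Atom) ∉ setFv CS C ∧
        (Sum.inl n : Atom) ∉ CS.fv c ∧ (Sum.inl n : Atom) ∉ A)
      (hloc : CS.LocMinFusion C vs n c) :
      LTS CS env P ⟨∅, .tau⟩
        (delims (Sum.inl n :: (A \ vs.image (Sum.inr : Var → Atom)).toList)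
          (P'.subst CS (fuseSubst vs n)))
  | closeJoin {P P'} {A : Finset Atom} {C : Set CS.D} {x c} {n : Name}
      (h : LTS CS env P ⟨A, .joinA C x c⟩ P')
      (hx : (Sum.inr x : Atom) ∈ A) (hn : (Sum.inl n : Atom) ∈ A)
      (he : CS.entails (CS.substSet (singleSubst x n) C) (CS.subst (singleSubst x n) c)) :
      LTS CS env P ⟨∅, .tau⟩
        (delims ((A.erase (Sum.inr x)).toList) (P'.subst CS (singleSubst x n)))
  | alphaC {P Q α P'} (h : AlphaEq CS P Q) (h2 : LTS CS env Q α P') :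
      LTS CS env P α P'

/-- Top-level reduction `↣` ([TopTau] and [TopCheck]). -/
inductive TopRed (CS : ConstraintSystem) (env : Env CS.D) :
    Proc CS.D → Proc CS.D → Prop where
  | topTau {P P'} (h : LTS CS env P ⟨∅, .tau⟩ P') : TopRed CS env P P'
  | topCheck {P P'} {A : Finset Atom} {C : Set CS.D}
      (h : LTS CS env P ⟨A, .checkA C⟩ P') (hc : ¬ CS.entails C CS.bot) :
      TopRed CS env P (delims A.toList P')

/-- `↣`-bisimilarity. -/
def IsBisim (CS : ConstraintSystem) (env : Env CS.D)
    (R : Proc CS.D → Proc CS.D → Prop) : Prop :=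
  (∀ P Q, R P Q → R Q P) ∧
  ∀ P Q, R P Q → ∀ P', TopRed CS env P P' → ∃ Q', TopRed CS env Q Q' ∧ R P' Q'

def Bisimilar (CS : ConstraintSystem) (env : Env CS.D) (P Q : Proc CS.D) : Prop :=
  ∃ R, IsBisim CS env R ∧ R P Q

/-- Renaming of actions (used to quotient by the choice of the fresh fused name). -/
def varOfAtom (x : Var) : Atom → Var
  | .inr v => v
  | .inl _ => x

def BAct.ren (CS : ConstraintSystem) (f : Atom → Atom) : BAct CS.D → BAct CS.D
  | .tau => .tau
  | .constr C => .constr (CS.ren f '' C)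
  | .askA C c => .askA (CS.ren f '' C) (CS.ren f c)
  | .fuseA C x c => .fuseA (CS.ren f '' C) (varOfAtom x (f (.inr x))) (CS.ren f c)
  | .joinA C x c => .joinA (CS.ren f '' C) (varOfAtom x (f (.inr x))) (CS.ren f c)
  | .checkA C => .checkA (CS.ren f '' C)

def Act.ren (CS : ConstraintSystem) (f : Atom → Atom) (α : Act CS.D) : Act CS.D :=
  ⟨α.binders.image f, α.base.ren CS f⟩

end Contracts
namespace Contracts

/-! ### PCL: propositional contract logic -/

inductive PCL (A : Type) : Type where
  | atom (a : A)
  | top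
  | bot
  | and (p q : PCL A)
  | or (p q : PCL A)
  | imp (p q : PCL A)
  | cimp (p q : PCL A)    -- contractual implication ↠

namespace PCL

/-- Hilbert-style provability for PCL: intuitionistic propositional logic
extended with the axioms `⊤ ↠ ⊤`, `(p ↠ p) → p` and
`(p' → p) → (p ↠ q) → (q → q') → (p' ↠ q')`. -/
inductive Proof {A : Type} : Set (PCL A) → PCL A → Prop where
  | ax {Γ : Set (PCL A)} {p} (h : p ∈ Γ) : Proof Γ p
  | mp {Γ} {p q} (h1 : Proof Γ (imp p q)) (h2 : Proof Γ p) : Proof Γ q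
  | axK {Γ} {p q} : Proof Γ (imp p (imp q p))
  | axS {Γ} {p q r} : Proof Γ (imp (imp p (imp q r)) (imp (imp p q) (imp p r)))
  | andI {Γ} {p q} : Proof Γ (imp p (imp q (and p q)))
  | andE1 {Γ} {p q} : Proof Γ (imp (and p q) p)
  | andE2 {Γ} {p q} : Proof Γ (imp (and p q) q)
  | orI1 {Γ} {p q} : Proof Γ (imp p (or p q))
  | orI2 {Γ} {p q} : Proof Γ (imp q (or p q))
  | orE {Γ} {p q r} : Proof Γ (imp (imp p r) (imp (imp q r) (imp (or p q) r)))
  | topI {Γ} : Proof Γ top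
  | botE {Γ} {p} : Proof Γ (imp bot p)
  | cimpTop {Γ} : Proof Γ (cimp top top)
  | cimpFix {Γ} {p} : Proof Γ (imp (cimp p p) p)
  | cimpMono {Γ} {p p' q q'} :
      Proof Γ (imp (imp p' p) (imp (cimp p q) (imp (imp q q') (cimp p' q'))))

end PCL

end Contracts
namespace Contracts

/-! ### PCL formulae over predicates applied to names/variables, as a constraint system -/

def PCL.mapAtoms {A B : Type} (f : A → B) : PCL A → PCL B
  | .atom a => .atom (f a)
  | .top => .top
  | .bot => .bot
  | .and p q => .and (p.mapAtoms f) (q.mapAtoms f)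
  | .or p q => .or (p.mapAtoms f) (q.mapAtoms f)
  | .imp p q => .imp (p.mapAtoms f) (q.mapAtoms f)
  | .cimp p q => .cimp (p.mapAtoms f) (q.mapAtoms f)

/-- Atomic formulae: a predicate applied to a tuple of names/variables. -/
abbrev PAtom (Pred : Type) : Type := Pred × List Atom

/-- PCL formulae over predicates `Pred`. -/
abbrev PForm (Pred : Type) : Type := PCL (PAtom Pred)

def pclFv {Pred : Type} : PForm Pred → Set Atom
  | .atom pa => {a | a ∈ pa.2}
  | .top => ∅
  | .bot => ∅
  | .and p q => pclFv p ∪ pclFv q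
  | .or p q => pclFv p ∪ pclFv q
  | .imp p q => pclFv p ∪ pclFv q
  | .cimp p q => pclFv p ∪ pclFv q

/-- Predicates occurring in a PCL formula. -/
def pclPreds {Pred : Type} : PForm Pred → Set Pred
  | .atom pa => {pa.1}
  | .top => ∅
  | .bot => ∅
  | .and p q => pclPreds p ∪ pclPreds q
  | .or p q => pclPreds p ∪ pclPreds q
  | .imp p q => pclPreds p ∪ pclPreds q
  | .cimp p q => pclPreds p ∪ pclPreds q

/-- The constraint system whose constraints are PCL formulae over `Pred`,
with entailment given by PCL provability. -/
def pclCS (Pred : Type) : ConstraintSystem where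
  D := PForm Pred
  bot := .bot
  entails := fun C c => PCL.Proof C c
  subst := fun σ => PCL.mapAtoms (fun pa => (pa.1, pa.2.map (substAtom σ)))
  ren := fun f => PCL.mapAtoms (fun pa => (pa.1, pa.2.map f))
  fv := pclFv

/-- Predicates occurring in the constraints of a prefix. -/
def Prefix.predsP {Pred : Type} : Prefix (PForm Pred) → Set Pred
  | .tau => ∅
  | .tell c => pclPreds c
  | .check c => pclPreds c
  | .ask c => pclPreds c
  | .join _ c => pclPreds c
  | .fuse _ c => pclPreds c

/-- Predicates occurring in the constraints of a process. -/
def Proc.preds {Pred : Type} : Proc (PForm Pred) → Set Pred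
  | .nil => ∅
  | .con c => pclPreds c
  | .act π P => π.predsP ∪ P.preds
  | .choice P Q => P.preds ∪ Q.preds
  | .par P Q => P.preds ∪ Q.preds
  | .delim _ P => P.preds
  | .const _ _ => ∅

end Contracts
namespace Contracts
namespace Ring

/-- Binary predicates `f_i` and `s_i` (`i = 1,…,4`, here indexed by `Fin 4`). -/
inductive RPred : Type where
  | f (i : Fin 4)
  | s (i : Fin 4)

abbrev F := PForm RPred

def CS : ConstraintSystem := pclCS RPred

def fP (i : Fin 4) (x t : Atom) : F := .atom (RPred.f i, [x, t])
def sP (i : Fin 4) (x t : Atom) : F := .atom (RPred.s i, [x, t])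

/-- `a_i(n,m,x) = ( f_{i⊞1}(x,m) ∧ s_{i⊟1}(x,n) ) ↠ ( f_i(x,n) ∧ s_i(x,m) )`,
with `⊞, ⊟` addition and subtraction modulo 4. -/
def aC (i : Fin 4) (n m : Name) (x : Atom) : F :=
  .cimp (.and (fP (i + 1) x (.inl m)) (sP (i - 1) x (.inl n)))
        (.and (fP i x (.inl n)) (sP i x (.inl m)))

/-- `f_i(x,n) ∧ s_i(x,m)`, the formula demanded by the `fuse` prefix of `A_i`. -/
def goal (i : Fin 4) (x : Atom) (n m : Name) : F :=
  .and (fP i x (.inl n)) (sP i x (.inl m))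

/-- `A_i(n,m) ≐ (x) tell a_i(n,m,x). fuse_x ( f_i(x,n) ∧ s_i(x,m) ). B_i(x)`,
with bound (session) variable `v` and continuation constant `B` of index `bIdx`. -/
def Aproc (i : Fin 4) (v : Var) (bIdx : ℕ) (n m : Name) : Proc F :=
  .delim (.inr v)
    (.act (.tell (aC i n m (.inr v)))
      (.act (.fuse v (goal i (.inr v) n m)) (.const bIdx [.inr v])))

end Ring
end Contracts

namespace Contracts
namespace Ring

/-- Index `i = j mod 4` of the `j`-th component of the length-8 loop. -/
def m4 (j : Fin 8) : Fin 4 := ⟨j.val % 4, by omega⟩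

/-- The length-8 loop
`P = A₁(n₁,n₂) | A₂(n₂,n₃) | A₃(n₃,n₄) | A₄(n₄,n₅) | A₁(n₅,n₆) | A₂(n₆,n₇) | A₃(n₇,n₈) | A₄(n₈,n₁)`
(the `j`-th component has session variable `j` and continuation constant `(m4 j).val`). -/
def loop8 (ns : Fin 8 → Name) : Proc F :=
  parList (List.ofFn fun j : Fin 8 =>
    Aproc (m4 j) j.val (m4 j).val (ns j) (ns (j + 1)))

/-- The state after the eight-party fusion to the fresh name `m`: all eight
session variables have been instantiated to `m`; the component that fired its
`fuse` prefix proceeds with `B(m)`, the others are left with the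
`ask`-instantiated prefixes `(fuse_x c){m/x} = ask (c{m/x})`. -/
def loop8After (ns : Fin 8 → Name) (m : Name) : Proc F :=
  .delim (.inl m)
    (parList (List.ofFn fun j : Fin 8 =>
      .par (.con (aC (m4 j) (ns j) (ns (j + 1)) (.inl m)))
        (if j = 0 then Proc.const (m4 j).val [.inl m]
         else .act (.ask (goal (m4 j) (.inl m) (ns j) (ns (j + 1))))
                (.const (m4 j).val [.inl m]))))

end Ring
end Contracts

namespace Contracts
namespace PCL

variable {A : Type}

theorem Proof.weaken {Γ Γ' : Set (PCL A)} {p : PCL A} (h : Proof Γ p) (hs : Γ ⊆ Γ') :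
    Proof Γ' p := by
  induction h with
  | ax h => exact .ax (hs h)
  | mp _ _ ih1 ih2 => exact .mp ih1 ih2
  | axK => exact .axK
  | axS => exact .axS
  | andI => exact .andI
  | andE1 => exact .andE1
  | andE2 => exact .andE2
  | orI1 => exact .orI1
  | orI2 => exact .orI2
  | orE => exact .orE
  | topI => exact .topI
  | botE => exact .botE
  | cimpTop => exact .cimpTop
  | cimpFix => exact .cimpFix
  | cimpMono => exact .cimpMono

theorem Proof.impRefl {Γ : Set (PCL A)} (p : PCL A) : Proof Γ (imp p p) :=
  .mp (.mp (.axS (q := imp p p)) .axK) .axK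

theorem Proof.deduction {Γ : Set (PCL A)} {p q : PCL A}
    (h : Proof (insert p Γ) q) : Proof Γ (imp p q) := by
  generalize hΔ : insert p Γ = Δ at h
  induction h with
  | ax hq =>
      subst hΔ
      rcases hq with rfl | hq
      · exact Proof.impRefl _
      · exact .mp .axK (.ax hq)
  | mp _ _ ih1 ih2 => exact .mp (.mp .axS ih1) ih2
  | axK => exact .mp .axK .axK
  | axS => exact .mp .axK .axS
  | andI => exact .mp .axK .andI
  | andE1 => exact .mp .axK .andE1
  | andE2 => exact .mp .axK .andE2
  | orI1 => exact .mp .axK .orI1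
  | orI2 => exact .mp .axK .orI2
  | orE => exact .mp .axK .orE
  | topI => exact .mp .axK .topI
  | botE => exact .mp .axK .botE
  | cimpTop => exact .mp .axK .cimpTop
  | cimpFix => exact .mp .axK .cimpFix
  | cimpMono => exact .mp .axK .cimpMono

theorem Proof.cut {Γ : Set (PCL A)} {p q : PCL A}
    (h : Proof (insert p Γ) q) (hp : Proof Γ p) : Proof Γ q :=
  .mp (Proof.deduction h) hp

theorem Proof.andIntro {Γ : Set (PCL A)} {p q : PCL A}
    (h1 : Proof Γ p) (h2 : Proof Γ q) : Proof Γ (and p q) :=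
  .mp (.mp .andI h1) h2

theorem Proof.andL {Γ : Set (PCL A)} {p q : PCL A} (h : Proof Γ (and p q)) :
    Proof Γ p := .mp .andE1 h

theorem Proof.andR {Γ : Set (PCL A)} {p q : PCL A} (h : Proof Γ (and p q)) :
    Proof Γ q := .mp .andE2 h

/-- From `q → p` and `p ↠ q`, conclude `q` (via `q ↠ q` and Fix). -/
theorem Proof.fixCimp {Γ : Set (PCL A)} {p q : PCL A}
    (hqp : Proof Γ (imp q p)) (hc : Proof Γ (cimp p q)) : Proof Γ q :=
  .mp .cimpFix (.mp (.mp (.mp .cimpMono hqp) hc) (Proof.impRefl q))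

theorem Proof.stepL {Δ : Set (PCL A)} {pf ps qf qs : PCL A}
    (hC : (cimp (and pf ps) (and qf qs)) ∈ Δ)
    (h1 : Proof (insert (and qf qs) Δ) pf)
    (h2 : Proof (insert (and qf qs) Δ) ps) : Proof Δ (and qf qs) :=
  Proof.fixCimp (Proof.deduction (Proof.andIntro h1 h2)) (.ax hC)

open Fin.NatCast Fin.CommRing in
/-- The circular handshake on an 8-cycle of contracts. -/
theorem Proof.cycle8 (Qf Qs : Fin 8 → PCL A) (Γ : Set (PCL A))
    (hC : ∀ j : Fin 8,
      (cimp (and (Qf (j+1)) (Qs (j-1))) (and (Qf j) (Qs j))) ∈ Γ) :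
    Proof Γ (and (Qf 0) (Qs 0)) := by
  set Q : Fin 8 → PCL A := fun j => and (Qf j) (Qs j) with hQ
  let Δ : ℕ → Set (PCL A) := fun k => Nat.rec Γ (fun k Δk => insert (Q ↑k) Δk) k
  have hΔsucc : ∀ k : ℕ, Δ (k+1) = insert (Q ↑k) (Δ k) := fun _ => rfl
  have hsub : ∀ k, Γ ⊆ Δ k := by
    intro k
    induction k with
    | zero => exact le_refl _
    | succ k ih => exact ih.trans (Set.subset_insert _ _)
  have hsub2 : ∀ k l, k ≤ l → Δ k ⊆ Δ l := by
    intro k l hkl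
    induction l with
    | zero => simp_all
    | succ l ih =>
        rcases Nat.lt_or_ge k (l+1) with h | h
        · exact (ih (by omega)).trans (Set.subset_insert _ _)
        · have : k = l + 1 := by omega
          subst this; exact le_refl _
  have hmemQ : ∀ (k : ℕ) (j : Fin 8), j.val < k → Q j ∈ Δ k := by
    intro k
    induction k with
    | zero => omega
    | succ k ih =>
        intro j hj
        rcases Nat.lt_or_ge j.val k with h | h
        · exact Set.mem_insert_of_mem _ (ih j h)
        · have hk : ((k : ℕ) : Fin 8) = j := by
            apply Fin.ext
            have := j.isLt
            simp [Fin.val_natCast]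
            omega
          rw [hΔsucc, hk]
          exact Set.mem_insert _ _
  -- downward chain D
  have D : ∀ d k : ℕ, k + d = 6 → Proof (Δ (k+1)) (Q ↑(k+1)) := by
    intro d
    induction d with
    | zero =>
        intro k hk
        have hk6 : k = 6 := by omega
        subst hk6
        have h7 : ((7:ℕ) : Fin 8) = (7 : Fin 8) := by decide
        rw [show (6:ℕ)+1 = 7 from rfl, h7]
        refine Proof.stepL (pf := Qf (7+1)) (ps := Qs (7-1)) (hsub 7 (hC 7)) ?_ ?_
        · have h0 : (7+1 : Fin 8) = 0 := by decide
          rw [h0]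
          exact Proof.andL (.ax (Set.mem_insert_of_mem _ (hmemQ 7 0 (by decide))))
        · have h6 : (7-1 : Fin 8) = 6 := by decide
          rw [h6]
          exact Proof.andR (.ax (Set.mem_insert_of_mem _ (hmemQ 7 6 (by decide))))
    | succ d ih =>
        intro k hk
        have IH := ih (k+1) (by omega)
        refine Proof.stepL (pf := Qf (↑(k+1)+1)) (ps := Qs (↑(k+1)-1)) (hsub (k+1) (hC ↑(k+1))) ?_ ?_
        · have : (↑(k+1)+1 : Fin 8) = ↑(k+2) := by push_cast; ring
          rw [this, show insert (Q ↑(k+1)) (Δ (k+1)) = Δ (k+2) from rfl]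
          exact Proof.andL IH
        · have e : (↑(k+1)-1 : Fin 8) = ↑k := by push_cast; ring
          rw [e, show insert (Q ↑(k+1)) (Δ (k+1)) = Δ (k+2) from rfl]
          refine Proof.andR (.ax (hmemQ (k+2) ↑k ?_))
          have : ((k:ℕ) : Fin 8).val = k % 8 := by simp [Fin.val_natCast]
          omega
  have D' : ∀ k : ℕ, k ≤ 6 → Proof (Δ (k+1)) (Q ↑(k+1)) := fun k hk =>
    D (6-k) k (by omega)
  -- lowering to Δ 1 by multicut
  have E : ∀ k : ℕ, k ≤ 6 → Proof (Δ 1) (Q ↑(k+1)) := by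
    intro k
    induction k using Nat.strong_induction_on with
    | _ k ihE =>
        intro hk
        have lower : ∀ (l : ℕ), l ≤ k → ∀ t, Proof (Δ (l+1)) t → Proof (Δ 1) t := by
          intro l
          induction l with
          | zero => intro _ t ht; exact ht
          | succ l ihl =>
              intro hl t ht
              rw [hΔsucc] at ht
              exact ihl (by omega) t
                (Proof.cut ht ((ihE l (by omega) (by omega)).weaken (hsub2 1 (l+1) (by omega))))
        exact lower k (le_refl k) _ (D' k hk)
  -- conclude
  have hΔ1 : Δ 1 = insert (Q 0) Γ := by
    rw [show (1:ℕ) = 0+1 from rfl, hΔsucc 0, show ((0:ℕ):Fin 8) = 0 by decide]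
    rfl
  refine Proof.stepL (pf := Qf (0+1)) (ps := Qs (0-1)) (hC 0) ?_ ?_
  · have h1 : (0+1 : Fin 8) = 1 := by decide
    rw [h1]
    have := Proof.andL (E 0 (by norm_num))
    rw [show ((0+1:ℕ) : Fin 8) = 1 by decide] at this
    refine Proof.weaken this ?_
    rw [hΔ1]
  · have h7 : (0-1 : Fin 8) = 7 := by decide
    rw [h7]
    have := Proof.andR (E 6 (le_refl 6))
    rw [show ((6+1:ℕ) : Fin 8) = 7 by decide] at this
    refine Proof.weaken this ?_
    rw [hΔ1]

end PCL
end Contracts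

namespace Contracts
namespace PCL

def himp (a b : Fin 7) : Fin 7 := if a ≤ b then 6 else b
def hcimp (a b : Fin 7) : Fin 7 := if a < b then 6 else b

def heval {A : Type} (v : A → Fin 7) : PCL A → Fin 7
  | .atom a => v a
  | .top => 6
  | .bot => 0
  | .and p q => min (heval v p) (heval v q)
  | .or p q => max (heval v p) (heval v q)
  | .imp p q => himp (heval v p) (heval v q)
  | .cimp p q => hcimp (heval v p) (heval v q)

theorem heval_sound {A : Type} {Γ : Set (PCL A)} {c : PCL A} (h : Proof Γ c)
    (v : A → Fin 7) (hΓ : ∀ d ∈ Γ, heval v d = 6) : heval v c = 6 := by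
  induction h with
  | ax h => exact hΓ _ h
  | mp _ _ ih1 ih2 =>
      simp only [heval] at ih1
      revert ih1 ih2
      generalize heval v _ = a
      generalize heval v _ = b
      revert a b; decide
  | axK =>
      simp only [heval]
      generalize heval v _ = a; generalize heval v _ = b
      revert a b; decide
  | axS =>
      simp only [heval]
      generalize heval v _ = a; generalize heval v _ = b; generalize heval v _ = c
      revert a b c; decide
  | andI =>
      simp only [heval]
      generalize heval v _ = a; generalize heval v _ = b
      revert a b; decide
  | andE1 =>
      simp only [heval]
      generalize heval v _ = a; generalize heval v _ = b
      revert a b; decide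
  | andE2 =>
      simp only [heval]
      generalize heval v _ = a; generalize heval v _ = b
      revert a b; decide
  | orI1 =>
      simp only [heval]
      generalize heval v _ = a; generalize heval v _ = b
      revert a b; decide
  | orI2 =>
      simp only [heval]
      generalize heval v _ = a; generalize heval v _ = b
      revert a b; decide
  | orE =>
      simp only [heval]
      generalize heval v _ = a; generalize heval v _ = b; generalize heval v _ = c
      revert a b c; decide
  | topI => rfl
  | botE =>
      simp only [heval]
      generalize heval v _ = a
      revert a; decide
  | cimpTop => rfl
  | cimpFix =>
      simp only [heval]
      generalize heval v _ = a
      revert a; decide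
  | cimpMono =>
      simp only [heval]
      generalize heval v _ = a; generalize heval v _ = b
      generalize heval v _ = c; generalize heval v _ = d
      revert a b c d; decide

end PCL
end Contracts

namespace Contracts
namespace Ring

/-- The contract of the `j`-th component of the 8-loop. -/
def cbar (ns : Fin 8 → Name) (j : Fin 8) : F :=
  aC (m4 j) (ns j) (ns (j + 1)) (.inr j.val)

/-- The set of the eight contracts. -/
def Cc (ns : Fin 8 → Name) : Set F := {d | ∃ j : Fin 8, d = cbar ns j}

/-- The goal of the `fuse` prefix of component `0`. -/
def goal0 (ns : Fin 8 → Name) : F := goal (m4 0) (.inr 0) (ns 0) (ns 1)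

lemma m4_succ : ∀ j : Fin 8, m4 j + 1 = m4 (j + 1) := by decide
lemma m4_pred : ∀ j : Fin 8, m4 j - 1 = m4 (j - 1) := by decide

/-- Circular-distance based rank (`1`–`5`, never `0` or `6`). -/
def rval (j₀ k : Fin 8) : Fin 7 :=
  ⟨min ((k - j₀).val) (8 - (k - j₀).val) + 1, by have := (k - j₀).isLt; omega⟩

lemma rval_pos : ∀ j₀ k : Fin 8, (0 : Fin 7) < rval j₀ k := by decide
lemma rval_ne6 : ∀ j₀ k : Fin 8, rval j₀ k ≠ 6 := by decide
lemma rval_min : ∀ j₀ j : Fin 8, j ≠ j₀ →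
    min (rval j₀ (j + 1)) (rval j₀ (j - 1)) < rval j₀ j := by decide

/-- The substituted session atom of component `k` under partial fusion `W ↦ m`. -/
def sigA (W : Finset Var) (m : Name) (k : Fin 8) : Atom :=
  if k.val ∈ W then .inl m else .inr k.val

/-- The countermodel valuation. -/
def wval (idx : Name → Option (Fin 8)) (W : Finset Var) (m : Name) (j₀ : Fin 8) :
    PAtom RPred → Fin 7
  | (.f i, [t, .inl u]) =>
      match idx u with
      | some k => if i = m4 k ∧ t = sigA W m k then rval j₀ k else 0
      | none => 0
  | (.s i, [t, .inl u]) =>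
      match idx u with
      | some k' => if i = m4 (k' - 1) ∧ t = sigA W m (k' - 1) then rval j₀ (k' - 1) else 0
      | none => 0
  | _ => 0

lemma substAtom_fuse (W : Finset Var) (m : Name) (k : Fin 8) :
    substAtom (fuseSubst W m) (.inr k.val) = sigA W m k := rfl

lemma subst_cbar (ns : Fin 8 → Name) (W : Finset Var) (m : Name) (j : Fin 8) :
    CS.subst (fuseSubst W m) (cbar ns j) =
      .cimp (.and (fP (m4 j + 1) (sigA W m j) (.inl (ns (j+1))))
                  (sP (m4 j - 1) (sigA W m j) (.inl (ns j))))
            (.and (fP (m4 j) (sigA W m j) (.inl (ns j)))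
                  (sP (m4 j) (sigA W m j) (.inl (ns (j+1))))) := rfl

lemma subst_goal0 (ns : Fin 8 → Name) (W : Finset Var) (m : Name) :
    CS.subst (fuseSubst W m) (goal0 ns) =
      .and (fP (m4 0) (sigA W m 0) (.inl (ns 0)))
           (sP (m4 0) (sigA W m 0) (.inl (ns 1))) := rfl

lemma sigA_ne (W : Finset Var) (m : Name) {k l : Fin 8} (h : k ≠ l)
    (hk : k.val ∉ W ∨ l.val ∉ W) : sigA W m k ≠ sigA W m l := by
  have hne : k.val ≠ l.val := fun e => h (Fin.ext e)
  unfold sigA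
  rcases hk with hk | hk
  · rw [if_neg hk]
    split <;> simp [hne]
  · rw [if_neg hk]
    split <;> simp [hne]

open Fin.CommRing in
theorem min8 (ns : Fin 8 → Name) (hdist : Function.Injective ns) (m : Name) :
    CS.MinFusion (Cc ns) (Finset.range 8) m (goal0 ns) := by
  classical
  constructor
  · -- positive entailment via the circular handshake
    have hfull : ∀ k : Fin 8, sigA (Finset.range 8) m k = .inl m := by
      intro k; simp [sigA, k.isLt]
    refine PCL.Proof.cycle8
      (fun j => fP (m4 j) (.inl m) (.inl (ns j)))
      (fun j => sP (m4 j) (.inl m) (.inl (ns (j+1)))) _ ?_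
    intro j
    refine ⟨cbar ns j, ⟨j, rfl⟩, ?_⟩
    have e : j - 1 + 1 = j := by ring
    rw [subst_cbar, hfull j, m4_succ j, m4_pred j]
    show _ = PCL.cimp (PCL.and (fP (m4 (j+1)) (.inl m) (.inl (ns (j+1))))
        (sP (m4 (j-1)) (.inl m) (.inl (ns (j-1+1)))))
      (PCL.and (fP (m4 j) (.inl m) (.inl (ns j)))
        (sP (m4 j) (.inl m) (.inl (ns (j+1)))))
    rw [e]
  · -- minimality
    intro W hW hP
    obtain ⟨x, hx8, hxW⟩ : ∃ x, x ∈ Finset.range 8 ∧ x ∉ W := by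
      rcases Finset.exists_of_ssubset hW with ⟨x, hx, hxW⟩
      exact ⟨x, hx, hxW⟩
    have hx8' : x < 8 := Finset.mem_range.mp hx8
    set j₀ : Fin 8 := ⟨x, hx8'⟩ with hj₀
    have hj₀W : j₀.val ∉ W := hxW
    set idx : Name → Option (Fin 8) :=
      fun u => if h : ∃ k, ns k = u then some h.choose else none with hidxdef
    have hidx : ∀ k : Fin 8, idx (ns k) = some k := by
      intro k
      have hex : ∃ k', ns k' = ns k := ⟨k, rfl⟩
      simp only [hidxdef, dif_pos hex]
      exact congrArg some (hdist hex.choose_spec)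
    set w := wval idx W m j₀ with hw
    -- values on the four kinds of atoms
    have wfc : ∀ j : Fin 8, w (RPred.f (m4 j), [sigA W m j, .inl (ns j)]) = rval j₀ j := by
      intro j; simp [hw, wval, hidx j]
    have wsc : ∀ j : Fin 8, w (RPred.s (m4 j), [sigA W m j, .inl (ns (j+1))]) = rval j₀ j := by
      intro j
      simp only [hw, wval, hidx (j+1)]
      rw [show j + 1 - 1 = j by ring]
      simp
    have wfp : ∀ j : Fin 8, w (RPred.f (m4 j + 1), [sigA W m j, .inl (ns (j+1))]) =
        (if sigA W m j = sigA W m (j+1) then rval j₀ (j+1) else 0) := by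
      intro j
      simp only [hw, wval, hidx (j+1)]
      rw [m4_succ j]
      by_cases h : sigA W m j = sigA W m (j+1) <;> simp [h]
    have wsp : ∀ j : Fin 8, w (RPred.s (m4 j - 1), [sigA W m j, .inl (ns j)]) =
        (if sigA W m j = sigA W m (j-1) then rval j₀ (j-1) else 0) := by
      intro j
      simp only [hw, wval, hidx j]
      rw [m4_pred j]
      by_cases h : sigA W m j = sigA W m (j-1) <;> simp [h]
    -- all substituted contracts evaluate to ⊤
    have hctx : ∀ d ∈ CS.substSet (fuseSubst W m) (Cc ns), PCL.heval w d = 6 := by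
      rintro d ⟨c, ⟨j, rfl⟩, rfl⟩
      rw [subst_cbar]
      show PCL.hcimp _ _ = 6
      rw [show PCL.heval w (PCL.and (fP (m4 j) (sigA W m j) (.inl (ns j)))
            (sP (m4 j) (sigA W m j) (.inl (ns (j+1))))) =
          min (w (RPred.f (m4 j), [sigA W m j, .inl (ns j)]))
              (w (RPred.s (m4 j), [sigA W m j, .inl (ns (j+1))])) from rfl,
        wfc j, wsc j]
      have hne1 : ∀ j : Fin 8, j ≠ j + 1 := by decide
      have hne2 : ∀ j : Fin 8, j ≠ j - 1 := by decide
      have hprem : PCL.heval w (PCL.and (fP (m4 j + 1) (sigA W m j) (.inl (ns (j+1))))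
            (sP (m4 j - 1) (sigA W m j) (.inl (ns j)))) < rval j₀ j := by
        rw [show PCL.heval w (PCL.and (fP (m4 j + 1) (sigA W m j) (.inl (ns (j+1))))
              (sP (m4 j - 1) (sigA W m j) (.inl (ns j)))) =
            min (w (RPred.f (m4 j + 1), [sigA W m j, .inl (ns (j+1))]))
                (w (RPred.s (m4 j - 1), [sigA W m j, .inl (ns j)])) from rfl,
          wfp j, wsp j]
        by_cases hj : j.val ∈ W
        · have hjj0 : j ≠ j₀ := fun e => hj₀W (e ▸ hj)
          by_cases h1 : (j+1).val ∈ W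
          · by_cases h2 : (j-1).val ∈ W
            · rw [if_pos (by simp [sigA, hj, h1]), if_pos (by simp [sigA, hj, h2])]
              exact rval_min j₀ j hjj0
            · rw [if_neg (sigA_ne W m (hne2 j) (Or.inr h2))]
              exact lt_of_le_of_lt (min_le_right _ _) (rval_pos j₀ j)
          · rw [if_neg (sigA_ne W m (hne1 j) (Or.inr h1))]
            exact lt_of_le_of_lt (min_le_left _ _) (rval_pos j₀ j)
        · rw [if_neg (sigA_ne W m (hne1 j) (Or.inl hj))]
          exact lt_of_le_of_lt (min_le_left _ _) (rval_pos j₀ j)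
      rw [min_self]
      exact if_pos hprem
    have h6 := PCL.heval_sound hP w hctx
    rw [subst_goal0] at h6
    rw [show PCL.heval w (PCL.and (fP (m4 0) (sigA W m 0) (.inl (ns 0)))
          (sP (m4 0) (sigA W m 0) (.inl (ns 1)))) =
        min (w (RPred.f (m4 0), [sigA W m 0, .inl (ns 0)]))
            (w (RPred.s (m4 0), [sigA W m 0, .inl (ns 1)])) from rfl,
      wfc 0] at h6
    rw [show ((1 : Fin 8)) = 0 + 1 by decide] at h6
    rw [wsc 0, min_self] at h6
    exact rval_ne6 j₀ 0 h6
end Ring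
end Contracts

namespace Contracts
namespace Ring

def glj (ns : Fin 8 → Name) (j : Fin 8) : F :=
  goal (m4 j) (.inr j.val) (ns j) (ns (j + 1))

def pend (ns : Fin 8 → Name) (j : Fin 8) : Proc F :=
  .act (.fuse j.val (glj ns j)) (.const (m4 j).val [.inr j.val])

def compP (ns : Fin 8 → Name) (j : Fin 8) : Proc F :=
  .delim (.inr j.val) (.act (.tell (cbar ns j)) (pend ns j))

def compT (ns : Fin 8 → Name) (j : Fin 8) : Proc F :=
  .delim (.inr j.val) (.par (.con (cbar ns j)) (pend ns j))

end Ring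
end Contracts

set_option maxHeartbeats 4000000 in
open Contracts Contracts.Ring in
/-- The encoding of the ring-to-star rule admits spurious rewritings on an
8-cycle: for pairwise distinct names `n₁,…,n₈`, the length-8 loop `P` can
perform a `↣`-transition in which all eight session variables are fused to a
single fresh name `m`. -/
theorem loop8_spurious_rewriting (env : Env Ring.F) (ns : Fin 8 → Name)
    (hdist : Function.Injective ns) :
    ∃ m : Name, (∀ j : Fin 8, m ≠ ns j) ∧
      ∃ T U : Proc Ring.F,
        Relation.ReflTransGen (TopRed Ring.CS env) (loop8 ns) T ∧
        TopRed Ring.CS env T U ∧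
        StructEq Ring.CS env U (loop8After ns m) := by
  classical
  obtain ⟨m, hm⟩ : ∃ m : Name, ∀ j : Fin 8, m ≠ ns j :=
    ⟨(Finset.univ.sup ns) + 1, fun j h => by
      have h2 : ns j ≤ Finset.univ.sup ns := Finset.le_sup (Finset.mem_univ j)
      exact Nat.ne_of_lt (Nat.lt_succ_of_le h2) h.symm⟩
  have hm' : ∀ j : Fin 8, ¬ (m = ns j) := hm
  refine ⟨m, hm, ?_⟩
  set st0 : Proc F := parList [compP ns 0, compP ns 1, compP ns 2, compP ns 3, compP ns 4, compP ns 5, compP ns 6, compP ns 7] with hst0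
  set st1 : Proc F := parList [compT ns 0, compP ns 1, compP ns 2, compP ns 3, compP ns 4, compP ns 5, compP ns 6, compP ns 7] with hst1
  set st2 : Proc F := parList [compT ns 0, compT ns 1, compP ns 2, compP ns 3, compP ns 4, compP ns 5, compP ns 6, compP ns 7] with hst2
  set st3 : Proc F := parList [compT ns 0, compT ns 1, compT ns 2, compP ns 3, compP ns 4, compP ns 5, compP ns 6, compP ns 7] with hst3
  set st4 : Proc F := parList [compT ns 0, compT ns 1, compT ns 2, compT ns 3, compP ns 4, compP ns 5, compP ns 6, compP ns 7] with hst4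
  set st5 : Proc F := parList [compT ns 0, compT ns 1, compT ns 2, compT ns 3, compT ns 4, compP ns 5, compP ns 6, compP ns 7] with hst5
  set st6 : Proc F := parList [compT ns 0, compT ns 1, compT ns 2, compT ns 3, compT ns 4, compT ns 5, compP ns 6, compP ns 7] with hst6
  set st7 : Proc F := parList [compT ns 0, compT ns 1, compT ns 2, compT ns 3, compT ns 4, compT ns 5, compT ns 6, compP ns 7] with hst7
  set st8 : Proc F := parList [compT ns 0, compT ns 1, compT ns 2, compT ns 3, compT ns 4, compT ns 5, compT ns 6, compT ns 7] with hst8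
  have compStep : ∀ j : Fin 8, LTS CS env (compP ns j) ⟨∅, .tau⟩ (compT ns j) := by
    intro j
    exact .del .tellA (by simp [Act.fa, BAct.fa])
  have step0 : TopRed CS env st0 st1 := .topTau (.parTauL (compStep 0))
  have step1 : TopRed CS env st1 st2 := .topTau (.parTauR (.parTauL (compStep 1)))
  have step2 : TopRed CS env st2 st3 := .topTau (.parTauR (.parTauR (.parTauL (compStep 2))))
  have step3 : TopRed CS env st3 st4 := .topTau (.parTauR (.parTauR (.parTauR (.parTauL (compStep 3)))))
  have step4 : TopRed CS env st4 st5 := .topTau (.parTauR (.parTauR (.parTauR (.parTauR (.parTauL (compStep 4))))))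
  have step5 : TopRed CS env st5 st6 := .topTau (.parTauR (.parTauR (.parTauR (.parTauR (.parTauR (.parTauL (compStep 5)))))))
  have step6 : TopRed CS env st6 st7 := .topTau (.parTauR (.parTauR (.parTauR (.parTauR (.parTauR (.parTauR (.parTauL (compStep 6))))))))
  have step7 : TopRed CS env st7 st8 := .topTau (.parTauR (.parTauR (.parTauR (.parTauR (.parTauR (.parTauR (.parTauR (.parTauL (compStep 7)))))))))
  have chain : Relation.ReflTransGen (TopRed CS env) (loop8 ns) st8 := by
    have h0 : loop8 ns = st0 := rfl
    rw [h0]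
    exact .head step0 (.head step1 (.head step2 (.head step3 (.head step4 (.head step5 (.head step6 (.head step7 (.refl))))))))
  have hc0 : LTS CS env (Proc.par (.con (cbar ns 0)) (pend ns 0))
      ⟨∅ ∪ ∅, .fuseA ({cbar ns 0} ∪ ∅ : Set F) 0 (glj ns 0)⟩ (Proc.par (.con (cbar ns 0)) (.const (m4 0).val [Sum.inr 0])) := by
    refine .parFuseL .constrA .fuseA ?_
    exact ⟨fun a ha => by simp at ha, fun b hb => by simp at hb⟩
  have hd0 : LTS CS env (compT ns 0)
      ⟨insert (Sum.inr 0) (∅ ∪ ∅), .fuseA ({cbar ns 0} ∪ ∅ : Set F) 0 (glj ns 0)⟩ (Proc.par (.con (cbar ns 0)) (.const (m4 0).val [Sum.inr 0])) := .openB hc0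
  have hc1 : LTS CS env (Proc.par (.con (cbar ns 1)) (pend ns 1))
      ⟨∅ ∪ ∅, .constr ({cbar ns 1} ∪ ∅ : Set F)⟩ (Proc.par (.con (cbar ns 1)) (pend ns 1)) := by
    refine .parConstr .constrA (.idleSum trivial) ?_
    exact ⟨fun a ha => by simp at ha, fun b hb => by simp at hb⟩
  have hd1 : LTS CS env (compT ns 1)
      ⟨(insert (Sum.inr 1) (∅ ∪ ∅) : Finset Atom), .constr ({cbar ns 1} ∪ ∅ : Set F)⟩ (Proc.par (.con (cbar ns 1)) (pend ns 1)) := .openB hc1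
  have hc2 : LTS CS env (Proc.par (.con (cbar ns 2)) (pend ns 2))
      ⟨∅ ∪ ∅, .constr ({cbar ns 2} ∪ ∅ : Set F)⟩ (Proc.par (.con (cbar ns 2)) (pend ns 2)) := by
    refine .parConstr .constrA (.idleSum trivial) ?_
    exact ⟨fun a ha => by simp at ha, fun b hb => by simp at hb⟩
  have hd2 : LTS CS env (compT ns 2)
      ⟨(insert (Sum.inr 2) (∅ ∪ ∅) : Finset Atom), .constr ({cbar ns 2} ∪ ∅ : Set F)⟩ (Proc.par (.con (cbar ns 2)) (pend ns 2)) := .openB hc2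
  have hc3 : LTS CS env (Proc.par (.con (cbar ns 3)) (pend ns 3))
      ⟨∅ ∪ ∅, .constr ({cbar ns 3} ∪ ∅ : Set F)⟩ (Proc.par (.con (cbar ns 3)) (pend ns 3)) := by
    refine .parConstr .constrA (.idleSum trivial) ?_
    exact ⟨fun a ha => by simp at ha, fun b hb => by simp at hb⟩
  have hd3 : LTS CS env (compT ns 3)
      ⟨(insert (Sum.inr 3) (∅ ∪ ∅) : Finset Atom), .constr ({cbar ns 3} ∪ ∅ : Set F)⟩ (Proc.par (.con (cbar ns 3)) (pend ns 3)) := .openB hc3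
  have hc4 : LTS CS env (Proc.par (.con (cbar ns 4)) (pend ns 4))
      ⟨∅ ∪ ∅, .constr ({cbar ns 4} ∪ ∅ : Set F)⟩ (Proc.par (.con (cbar ns 4)) (pend ns 4)) := by
    refine .parConstr .constrA (.idleSum trivial) ?_
    exact ⟨fun a ha => by simp at ha, fun b hb => by simp at hb⟩
  have hd4 : LTS CS env (compT ns 4)
      ⟨(insert (Sum.inr 4) (∅ ∪ ∅) : Finset Atom), .constr ({cbar ns 4} ∪ ∅ : Set F)⟩ (Proc.par (.con (cbar ns 4)) (pend ns 4)) := .openB hc4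
  have hc5 : LTS CS env (Proc.par (.con (cbar ns 5)) (pend ns 5))
      ⟨∅ ∪ ∅, .constr ({cbar ns 5} ∪ ∅ : Set F)⟩ (Proc.par (.con (cbar ns 5)) (pend ns 5)) := by
    refine .parConstr .constrA (.idleSum trivial) ?_
    exact ⟨fun a ha => by simp at ha, fun b hb => by simp at hb⟩
  have hd5 : LTS CS env (compT ns 5)
      ⟨(insert (Sum.inr 5) (∅ ∪ ∅) : Finset Atom), .constr ({cbar ns 5} ∪ ∅ : Set F)⟩ (Proc.par (.con (cbar ns 5)) (pend ns 5)) := .openB hc5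
  have hc6 : LTS CS env (Proc.par (.con (cbar ns 6)) (pend ns 6))
      ⟨∅ ∪ ∅, .constr ({cbar ns 6} ∪ ∅ : Set F)⟩ (Proc.par (.con (cbar ns 6)) (pend ns 6)) := by
    refine .parConstr .constrA (.idleSum trivial) ?_
    exact ⟨fun a ha => by simp at ha, fun b hb => by simp at hb⟩
  have hd6 : LTS CS env (compT ns 6)
      ⟨(insert (Sum.inr 6) (∅ ∪ ∅) : Finset Atom), .constr ({cbar ns 6} ∪ ∅ : Set F)⟩ (Proc.par (.con (cbar ns 6)) (pend ns 6)) := .openB hc6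
  have hc7 : LTS CS env (Proc.par (.con (cbar ns 7)) (pend ns 7))
      ⟨∅ ∪ ∅, .constr ({cbar ns 7} ∪ ∅ : Set F)⟩ (Proc.par (.con (cbar ns 7)) (pend ns 7)) := by
    refine .parConstr .constrA (.idleSum trivial) ?_
    exact ⟨fun a ha => by simp at ha, fun b hb => by simp at hb⟩
  have hd7 : LTS CS env (compT ns 7)
      ⟨(insert (Sum.inr 7) (∅ ∪ ∅) : Finset Atom), .constr ({cbar ns 7} ∪ ∅ : Set F)⟩ (Proc.par (.con (cbar ns 7)) (pend ns 7)) := .openB hc7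
  have r8 : LTS CS env (Proc.nil : Proc F) ⟨∅, .constr (∅ : Set F)⟩ (Proc.nil : Proc F) :=
    .idleSum trivial
  have r7 : LTS CS env (Proc.par (compT ns 7) (Proc.nil : Proc F))
      ⟨(insert (Sum.inr 7) (∅ ∪ ∅) : Finset Atom) ∪ (∅ : Finset Atom), .constr (({cbar ns 7} ∪ ∅ : Set F) ∪ (∅ : Set F))⟩ (Proc.par (Proc.par (.con (cbar ns 7)) (pend ns 7)) (Proc.nil : Proc F)) := by
    refine .parConstr hd7 r8 ?_
    constructor
    · intro a ha
      fin_cases ha <;>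
        exact ⟨by decide, by dsimp only [BAct.fa, Act.fa, setFv, CS, pclCS]; simp [BAct.fa, Act.fa, setFv, CS, pclCS, pclFv, cbar, aC, fP, sP, glj, Ring.goal, Proc.free, Prefix.fvP, pend, Set.mem_union, Set.mem_iUnion] <;> first | decide | (intro x hx; rcases hx with hx | hx | hx | hx | hx | hx | hx | hx | hx <;> first | exact (hx : False).elim | (change x = _ at hx; subst hx; simp [pclFv] <;> decide) | (simp [pclFv] <;> decide)), by dsimp only [BAct.fa, Act.fa, setFv, CS, pclCS]; simp [BAct.fa, Act.fa, setFv, CS, pclCS, pclFv, cbar, aC, fP, sP, glj, Ring.goal, Proc.free, Prefix.fvP, pend, Set.mem_union, Set.mem_iUnion] <;> first | decide | (intro x hx; rcases hx with hx | hx | hx | hx | hx | hx | hx | hx | hx <;> first | exact (hx : False).elim | (change x = _ at hx; subst hx; simp [pclFv] <;> decide) | (simp [pclFv] <;> decide))⟩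
    · intro b hb
      fin_cases hb <;>
        exact ⟨by dsimp only [BAct.fa, Act.fa, setFv, CS, pclCS]; simp [BAct.fa, Act.fa, setFv, CS, pclCS, pclFv, cbar, aC, fP, sP, glj, Ring.goal, Proc.free, Prefix.fvP, pend, Set.mem_union, Set.mem_iUnion] <;> first | decide | (intro x hx; rcases hx with hx | hx | hx | hx | hx | hx | hx | hx | hx <;> first | exact (hx : False).elim | (change x = _ at hx; subst hx; simp [pclFv] <;> decide) | (simp [pclFv] <;> decide)), by dsimp only [BAct.fa, Act.fa, setFv, CS, pclCS]; simp [BAct.fa, Act.fa, setFv, CS, pclCS, pclFv, cbar, aC, fP, sP, glj, Ring.goal, Proc.free, Prefix.fvP, pend, Set.mem_union, Set.mem_iUnion] <;> first | decide | (intro x hx; rcases hx with hx | hx | hx | hx | hx | hx | hx | hx | hx <;> first | exact (hx : False).elim | (change x = _ at hx; subst hx; simp [pclFv] <;> decide) | (simp [pclFv] <;> decide))⟩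
  have r6 : LTS CS env (Proc.par (compT ns 6) (Proc.par (compT ns 7) (Proc.nil : Proc F)))
      ⟨(insert (Sum.inr 6) (∅ ∪ ∅) : Finset Atom) ∪ ((insert (Sum.inr 7) (∅ ∪ ∅) : Finset Atom) ∪ (∅ : Finset Atom)), .constr (({cbar ns 6} ∪ ∅ : Set F) ∪ (({cbar ns 7} ∪ ∅ : Set F) ∪ (∅ : Set F)))⟩ (Proc.par (Proc.par (.con (cbar ns 6)) (pend ns 6)) (Proc.par (Proc.par (.con (cbar ns 7)) (pend ns 7)) (Proc.nil : Proc F))) := by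
    refine .parConstr hd6 r7 ?_
    constructor
    · intro a ha
      fin_cases ha <;>
        exact ⟨by decide, by dsimp only [BAct.fa, Act.fa, setFv, CS, pclCS]; simp [BAct.fa, Act.fa, setFv, CS, pclCS, pclFv, cbar, aC, fP, sP, glj, Ring.goal, Proc.free, Prefix.fvP, pend, Set.mem_union, Set.mem_iUnion] <;> first | decide | (intro x hx; rcases hx with hx | hx | hx | hx | hx | hx | hx | hx | hx <;> first | exact (hx : False).elim | (change x = _ at hx; subst hx; simp [pclFv] <;> decide) | (simp [pclFv] <;> decide)), by dsimp only [BAct.fa, Act.fa, setFv, CS, pclCS]; simp [BAct.fa, Act.fa, setFv, CS, pclCS, pclFv, cbar, aC, fP, sP, glj, Ring.goal, Proc.free, Prefix.fvP, pend, Set.mem_union, Set.mem_iUnion] <;> first | decide | (intro x hx; rcases hx with hx | hx | hx | hx | hx | hx | hx | hx | hx <;> first | exact (hx : False).elim | (change x = _ at hx; subst hx; simp [pclFv] <;> decide) | (simp [pclFv] <;> decide))⟩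
    · intro b hb
      fin_cases hb <;>
        exact ⟨by dsimp only [BAct.fa, Act.fa, setFv, CS, pclCS]; simp [BAct.fa, Act.fa, setFv, CS, pclCS, pclFv, cbar, aC, fP, sP, glj, Ring.goal, Proc.free, Prefix.fvP, pend, Set.mem_union, Set.mem_iUnion] <;> first | decide | (intro x hx; rcases hx with hx | hx | hx | hx | hx | hx | hx | hx | hx <;> first | exact (hx : False).elim | (change x = _ at hx; subst hx; simp [pclFv] <;> decide) | (simp [pclFv] <;> decide)), by dsimp only [BAct.fa, Act.fa, setFv, CS, pclCS]; simp [BAct.fa, Act.fa, setFv, CS, pclCS, pclFv, cbar, aC, fP, sP, glj, Ring.goal, Proc.free, Prefix.fvP, pend, Set.mem_union, Set.mem_iUnion] <;> first | decide | (intro x hx; rcases hx with hx | hx | hx | hx | hx | hx | hx | hx | hx <;> first | exact (hx : False).elim | (change x = _ at hx; subst hx; simp [pclFv] <;> decide) | (simp [pclFv] <;> decide))⟩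
  have r5 : LTS CS env (Proc.par (compT ns 5) (Proc.par (compT ns 6) (Proc.par (compT ns 7) (Proc.nil : Proc F))))
      ⟨(insert (Sum.inr 5) (∅ ∪ ∅) : Finset Atom) ∪ ((insert (Sum.inr 6) (∅ ∪ ∅) : Finset Atom) ∪ ((insert (Sum.inr 7) (∅ ∪ ∅) : Finset Atom) ∪ (∅ : Finset Atom))), .constr (({cbar ns 5} ∪ ∅ : Set F) ∪ (({cbar ns 6} ∪ ∅ : Set F) ∪ (({cbar ns 7} ∪ ∅ : Set F) ∪ (∅ : Set F))))⟩ (Proc.par (Proc.par (.con (cbar ns 5)) (pend ns 5)) (Proc.par (Proc.par (.con (cbar ns 6)) (pend ns 6)) (Proc.par (Proc.par (.con (cbar ns 7)) (pend ns 7)) (Proc.nil : Proc F)))) := by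
    refine .parConstr hd5 r6 ?_
    constructor
    · intro a ha
      fin_cases ha <;>
        exact ⟨by decide, by dsimp only [BAct.fa, Act.fa, setFv, CS, pclCS]; simp [BAct.fa, Act.fa, setFv, CS, pclCS, pclFv, cbar, aC, fP, sP, glj, Ring.goal, Proc.free, Prefix.fvP, pend, Set.mem_union, Set.mem_iUnion] <;> first | decide | (intro x hx; rcases hx with hx | hx | hx | hx | hx | hx | hx | hx | hx <;> first | exact (hx : False).elim | (change x = _ at hx; subst hx; simp [pclFv] <;> decide) | (simp [pclFv] <;> decide)), by dsimp only [BAct.fa, Act.fa, setFv, CS, pclCS]; simp [BAct.fa, Act.fa, setFv, CS, pclCS, pclFv, cbar, aC, fP, sP, glj, Ring.goal, Proc.free, Prefix.fvP, pend, Set.mem_union, Set.mem_iUnion] <;> first | decide | (intro x hx; rcases hx with hx | hx | hx | hx | hx | hx | hx | hx | hx <;> first | exact (hx : False).elim | (change x = _ at hx; subst hx; simp [pclFv] <;> decide) | (simp [pclFv] <;> decide))⟩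
    · intro b hb
      fin_cases hb <;>
        exact ⟨by dsimp only [BAct.fa, Act.fa, setFv, CS, pclCS]; simp [BAct.fa, Act.fa, setFv, CS, pclCS, pclFv, cbar, aC, fP, sP, glj, Ring.goal, Proc.free, Prefix.fvP, pend, Set.mem_union, Set.mem_iUnion] <;> first | decide | (intro x hx; rcases hx with hx | hx | hx | hx | hx | hx | hx | hx | hx <;> first | exact (hx : False).elim | (change x = _ at hx; subst hx; simp [pclFv] <;> decide) | (simp [pclFv] <;> decide)), by dsimp only [BAct.fa, Act.fa, setFv, CS, pclCS]; simp [BAct.fa, Act.fa, setFv, CS, pclCS, pclFv, cbar, aC, fP, sP, glj, Ring.goal, Proc.free, Prefix.fvP, pend, Set.mem_union, Set.mem_iUnion] <;> first | decide | (intro x hx; rcases hx with hx | hx | hx | hx | hx | hx | hx | hx | hx <;> first | exact (hx : False).elim | (change x = _ at hx; subst hx; simp [pclFv] <;> decide) | (simp [pclFv] <;> decide))⟩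
  have r4 : LTS CS env (Proc.par (compT ns 4) (Proc.par (compT ns 5) (Proc.par (compT ns 6) (Proc.par (compT ns 7) (Proc.nil : Proc F)))))
      ⟨(insert (Sum.inr 4) (∅ ∪ ∅) : Finset Atom) ∪ ((insert (Sum.inr 5) (∅ ∪ ∅) : Finset Atom) ∪ ((insert (Sum.inr 6) (∅ ∪ ∅) : Finset Atom) ∪ ((insert (Sum.inr 7) (∅ ∪ ∅) : Finset Atom) ∪ (∅ : Finset Atom)))), .constr (({cbar ns 4} ∪ ∅ : Set F) ∪ (({cbar ns 5} ∪ ∅ : Set F) ∪ (({cbar ns 6} ∪ ∅ : Set F) ∪ (({cbar ns 7} ∪ ∅ : Set F) ∪ (∅ : Set F)))))⟩ (Proc.par (Proc.par (.con (cbar ns 4)) (pend ns 4)) (Proc.par (Proc.par (.con (cbar ns 5)) (pend ns 5)) (Proc.par (Proc.par (.con (cbar ns 6)) (pend ns 6)) (Proc.par (Proc.par (.con (cbar ns 7)) (pend ns 7)) (Proc.nil : Proc F))))) := by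
    refine .parConstr hd4 r5 ?_
    constructor
    · intro a ha
      fin_cases ha <;>
        exact ⟨by decide, by dsimp only [BAct.fa, Act.fa, setFv, CS, pclCS]; simp [BAct.fa, Act.fa, setFv, CS, pclCS, pclFv, cbar, aC, fP, sP, glj, Ring.goal, Proc.free, Prefix.fvP, pend, Set.mem_union, Set.mem_iUnion] <;> first | decide | (intro x hx; rcases hx with hx | hx | hx | hx | hx | hx | hx | hx | hx <;> first | exact (hx : False).elim | (change x = _ at hx; subst hx; simp [pclFv] <;> decide) | (simp [pclFv] <;> decide)), by dsimp only [BAct.fa, Act.fa, setFv, CS, pclCS]; simp [BAct.fa, Act.fa, setFv, CS, pclCS, pclFv, cbar, aC, fP, sP, glj, Ring.goal, Proc.free, Prefix.fvP, pend, Set.mem_union, Set.mem_iUnion] <;> first | decide | (intro x hx; rcases hx with hx | hx | hx | hx | hx | hx | hx | hx | hx <;> first | exact (hx : False).elim | (change x = _ at hx; subst hx; simp [pclFv] <;> decide) | (simp [pclFv] <;> decide))⟩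
    · intro b hb
      fin_cases hb <;>
        exact ⟨by dsimp only [BAct.fa, Act.fa, setFv, CS, pclCS]; simp [BAct.fa, Act.fa, setFv, CS, pclCS, pclFv, cbar, aC, fP, sP, glj, Ring.goal, Proc.free, Prefix.fvP, pend, Set.mem_union, Set.mem_iUnion] <;> first | decide | (intro x hx; rcases hx with hx | hx | hx | hx | hx | hx | hx | hx | hx <;> first | exact (hx : False).elim | (change x = _ at hx; subst hx; simp [pclFv] <;> decide) | (simp [pclFv] <;> decide)), by dsimp only [BAct.fa, Act.fa, setFv, CS, pclCS]; simp [BAct.fa, Act.fa, setFv, CS, pclCS, pclFv, cbar, aC, fP, sP, glj, Ring.goal, Proc.free, Prefix.fvP, pend, Set.mem_union, Set.mem_iUnion] <;> first | decide | (intro x hx; rcases hx with hx | hx | hx | hx | hx | hx | hx | hx | hx <;> first | exact (hx : False).elim | (change x = _ at hx; subst hx; simp [pclFv] <;> decide) | (simp [pclFv] <;> decide))⟩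
  have r3 : LTS CS env (Proc.par (compT ns 3) (Proc.par (compT ns 4) (Proc.par (compT ns 5) (Proc.par (compT ns 6) (Proc.par (compT ns 7) (Proc.nil : Proc F))))))
      ⟨(insert (Sum.inr 3) (∅ ∪ ∅) : Finset Atom) ∪ ((insert (Sum.inr 4) (∅ ∪ ∅) : Finset Atom) ∪ ((insert (Sum.inr 5) (∅ ∪ ∅) : Finset Atom) ∪ ((insert (Sum.inr 6) (∅ ∪ ∅) : Finset Atom) ∪ ((insert (Sum.inr 7) (∅ ∪ ∅) : Finset Atom) ∪ (∅ : Finset Atom))))), .constr (({cbar ns 3} ∪ ∅ : Set F) ∪ (({cbar ns 4} ∪ ∅ : Set F) ∪ (({cbar ns 5} ∪ ∅ : Set F) ∪ (({cbar ns 6} ∪ ∅ : Set F) ∪ (({cbar ns 7} ∪ ∅ : Set F) ∪ (∅ : Set F))))))⟩ (Proc.par (Proc.par (.con (cbar ns 3)) (pend ns 3)) (Proc.par (Proc.par (.con (cbar ns 4)) (pend ns 4)) (Proc.par (Proc.par (.con (cbar ns 5)) (pend ns 5)) (Proc.par (Proc.par (.con (cbar ns 6)) (pend ns 6)) (Proc.par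 (Proc.par (.con (cbar ns 7)) (pend ns 7)) (Proc.nil : Proc F)))))) := by
    refine .parConstr hd3 r4 ?_
    constructor
    · intro a ha
      fin_cases ha <;>
        exact ⟨by decide, by dsimp only [BAct.fa, Act.fa, setFv, CS, pclCS]; simp [BAct.fa, Act.fa, setFv, CS, pclCS, pclFv, cbar, aC, fP, sP, glj, Ring.goal, Proc.free, Prefix.fvP, pend, Set.mem_union, Set.mem_iUnion] <;> first | decide | (intro x hx; rcases hx with hx | hx | hx | hx | hx | hx | hx | hx | hx <;> first | exact (hx : False).elim | (change x = _ at hx; subst hx; simp [pclFv] <;> decide) | (simp [pclFv] <;> decide)), by dsimp only [BAct.fa, Act.fa, setFv, CS, pclCS]; simp [BAct.fa, Act.fa, setFv, CS, pclCS, pclFv, cbar, aC, fP, sP, glj, Ring.goal, Proc.free, Prefix.fvP, pend, Set.mem_union, Set.mem_iUnion] <;> first | decide | (intro x hx; rcases hx with hx | hx | hx | hx | hx | hx | hx | hx | hx <;> first | exact (hx : False).elim | (change x = _ at hx; subst hx; simp [pclFv] <;> decide) | (simp [pclFv] <;> decide))⟩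
    · intro b hb
      fin_cases hb <;>
        exact ⟨by dsimp only [BAct.fa, Act.fa, setFv, CS, pclCS]; simp [BAct.fa, Act.fa, setFv, CS, pclCS, pclFv, cbar, aC, fP, sP, glj, Ring.goal, Proc.free, Prefix.fvP, pend, Set.mem_union, Set.mem_iUnion] <;> first | decide | (intro x hx; rcases hx with hx | hx | hx | hx | hx | hx | hx | hx | hx <;> first | exact (hx : False).elim | (change x = _ at hx; subst hx; simp [pclFv] <;> decide) | (simp [pclFv] <;> decide)), by dsimp only [BAct.fa, Act.fa, setFv, CS, pclCS]; simp [BAct.fa, Act.fa, setFv, CS, pclCS, pclFv, cbar, aC, fP, sP, glj, Ring.goal, Proc.free, Prefix.fvP, pend, Set.mem_union, Set.mem_iUnion] <;> first | decide | (intro x hx; rcases hx with hx | hx | hx | hx | hx | hx | hx | hx | hx <;> first | exact (hx : False).elim | (change x = _ at hx; subst hx; simp [pclFv] <;> decide) | (simp [pclFv] <;> decide))⟩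
  have r2 : LTS CS env (Proc.par (compT ns 2) (Proc.par (compT ns 3) (Proc.par (compT ns 4) (Proc.par (compT ns 5) (Proc.par (compT ns 6) (Proc.par (compT ns 7) (Proc.nil : Proc F)))))))
      ⟨(insert (Sum.inr 2) (∅ ∪ ∅) : Finset Atom) ∪ ((insert (Sum.inr 3) (∅ ∪ ∅) : Finset Atom) ∪ ((insert (Sum.inr 4) (∅ ∪ ∅) : Finset Atom) ∪ ((insert (Sum.inr 5) (∅ ∪ ∅) : Finset Atom) ∪ ((insert (Sum.inr 6) (∅ ∪ ∅) : Finset Atom) ∪ ((insert (Sum.inr 7) (∅ ∪ ∅) : Finset Atom) ∪ (∅ : Finset Atom)))))), .constr (({cbar ns 2} ∪ ∅ : Set F) ∪ (({cbar ns 3} ∪ ∅ : Set F) ∪ (({cbar ns 4} ∪ ∅ : Set F) ∪ (({cbar ns 5} ∪ ∅ : Set F) ∪ (({cbar ns 6} ∪ ∅ : Set F) ∪ (({cbar ns 7} ∪ ∅ : Set F) ∪ (∅ : Set F)))))))⟩ (Proc.par (Proc.par (.con (cbar ns 2)) (pend ns 2)) (Proc.par (Proc.par (.con (cbar ns 3))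 (pend ns 3)) (Proc.par (Proc.par (.con (cbar ns 4)) (pend ns 4)) (Proc.par (Proc.par (.con (cbar ns 5)) (pend ns 5)) (Proc.par (Proc.par (.con (cbar ns 6)) (pend ns 6)) (Proc.par (Proc.par (.con (cbar ns 7)) (pend ns 7)) (Proc.nil : Proc F))))))) := by
    refine .parConstr hd2 r3 ?_
    constructor
    · intro a ha
      fin_cases ha <;>
        exact ⟨by decide, by dsimp only [BAct.fa, Act.fa, setFv, CS, pclCS]; simp [BAct.fa, Act.fa, setFv, CS, pclCS, pclFv, cbar, aC, fP, sP, glj, Ring.goal, Proc.free, Prefix.fvP, pend, Set.mem_union, Set.mem_iUnion] <;> first | decide | (intro x hx; rcases hx with hx | hx | hx | hx | hx | hx | hx | hx | hx <;> first | exact (hx : False).elim | (change x = _ at hx; subst hx; simp [pclFv] <;> decide) | (simp [pclFv] <;> decide)), by dsimp only [BAct.fa, Act.fa, setFv, CS, pclCS]; simp [BAct.fa, Act.fa, setFv, CS, pclCS, pclFv, cbar, aC, fP, sP, glj, Ring.goal, Proc.free, Prefix.fvP, pend, Set.mem_union, Set.mem_iUnion] <;> first | decide | (intro x hx; rcases hx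 with hx | hx | hx | hx | hx | hx | hx | hx | hx <;> first | exact (hx : False).elim | (change x = _ at hx; subst hx; simp [pclFv] <;> decide) | (simp [pclFv] <;> decide))⟩
    · intro b hb
      fin_cases hb <;>
        exact ⟨by dsimp only [BAct.fa, Act.fa, setFv, CS, pclCS]; simp [BAct.fa, Act.fa, setFv, CS, pclCS, pclFv, cbar, aC, fP, sP, glj, Ring.goal, Proc.free, Prefix.fvP, pend, Set.mem_union, Set.mem_iUnion] <;> first | decide | (intro x hx; rcases hx with hx | hx | hx | hx | hx | hx | hx | hx | hx <;> first | exact (hx : False).elim | (change x = _ at hx; subst hx; simp [pclFv] <;> decide) | (simp [pclFv] <;> decide)), by dsimp only [BAct.fa, Act.fa, setFv, CS, pclCS]; simp [BAct.fa, Act.fa, setFv, CS, pclCS, pclFv, cbar, aC, fP, sP, glj, Ring.goal, Proc.free, Prefix.fvP, pend, Set.mem_union, Set.mem_iUnion] <;> first | decide | (intro x hx; rcases hx with hx | hx | hx | hx | hx | hx | hx | hx | hx <;> first | exact (hx : False).elim | (change x = _ at hx; subst hx; simp [pclFv] <;> decide) | (simp [pclFv] <;> decide))⟩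
  have r1 : LTS CS env (Proc.par (compT ns 1) (Proc.par (compT ns 2) (Proc.par (compT ns 3) (Proc.par (compT ns 4) (Proc.par (compT ns 5) (Proc.par (compT ns 6) (Proc.par (compT ns 7) (Proc.nil : Proc F))))))))
      ⟨(insert (Sum.inr 1) (∅ ∪ ∅) : Finset Atom) ∪ ((insert (Sum.inr 2) (∅ ∪ ∅) : Finset Atom) ∪ ((insert (Sum.inr 3) (∅ ∪ ∅) : Finset Atom) ∪ ((insert (Sum.inr 4) (∅ ∪ ∅) : Finset Atom) ∪ ((insert (Sum.inr 5) (∅ ∪ ∅) : Finset Atom) ∪ ((insert (Sum.inr 6) (∅ ∪ ∅) : Finset Atom) ∪ ((insert (Sum.inr 7) (∅ ∪ ∅) : Finset Atom) ∪ (∅ : Finset Atom))))))), .constr (({cbar ns 1} ∪ ∅ : Set F) ∪ (({cbar ns 2} ∪ ∅ : Set F) ∪ (({cbar ns 3} ∪ ∅ : Set F) ∪ (({cbar ns 4} ∪ ∅ : Set F) ∪ (({cbar ns 5} ∪ ∅ : Set F) ∪ (({cbar ns 6} ∪ ∅ : Set F) ∪ (({cbar ns 7} ∪ ∅ : Set F)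 ∪ (∅ : Set F))))))))⟩ (Proc.par (Proc.par (.con (cbar ns 1)) (pend ns 1)) (Proc.par (Proc.par (.con (cbar ns 2)) (pend ns 2)) (Proc.par (Proc.par (.con (cbar ns 3)) (pend ns 3)) (Proc.par (Proc.par (.con (cbar ns 4)) (pend ns 4)) (Proc.par (Proc.par (.con (cbar ns 5)) (pend ns 5)) (Proc.par (Proc.par (.con (cbar ns 6)) (pend ns 6)) (Proc.par (Proc.par (.con (cbar ns 7)) (pend ns 7)) (Proc.nil : Proc F)))))))) := by
    refine .parConstr hd1 r2 ?_
    constructor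
    · intro a ha
      fin_cases ha <;>
        exact ⟨by decide, by dsimp only [BAct.fa, Act.fa, setFv, CS, pclCS]; simp [BAct.fa, Act.fa, setFv, CS, pclCS, pclFv, cbar, aC, fP, sP, glj, Ring.goal, Proc.free, Prefix.fvP, pend, Set.mem_union, Set.mem_iUnion] <;> first | decide | (intro x hx; rcases hx with hx | hx | hx | hx | hx | hx | hx | hx | hx <;> first | exact (hx : False).elim | (change x = _ at hx; subst hx; simp [pclFv] <;> decide) | (simp [pclFv] <;> decide)), by dsimp only [BAct.fa, Act.fa, setFv, CS, pclCS]; simp [BAct.fa, Act.fa, setFv, CS, pclCS, pclFv, cbar, aC, fP, sP, glj, Ring.goal, Proc.free, Prefix.fvP, pend, Set.mem_union, Set.mem_iUnion] <;> first | decide | (intro x hx; rcases hx with hx | hx | hx | hx | hx | hx | hx | hx | hx <;> first | exact (hx : False).elim | (change x = _ at hx; subst hx; simp [pclFv] <;> decide) | (simp [pclFv] <;> decide))⟩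
    · intro b hb
      fin_cases hb <;>
        exact ⟨by dsimp only [BAct.fa, Act.fa, setFv, CS, pclCS]; simp [BAct.fa, Act.fa, setFv, CS, pclCS, pclFv, cbar, aC, fP, sP, glj, Ring.goal, Proc.free, Prefix.fvP, pend, Set.mem_union, Set.mem_iUnion] <;> first | decide | (intro x hx; rcases hx with hx | hx | hx | hx | hx | hx | hx | hx | hx <;> first | exact (hx : False).elim | (change x = _ at hx; subst hx; simp [pclFv] <;> decide) | (simp [pclFv] <;> decide)), by dsimp only [BAct.fa, Act.fa, setFv, CS, pclCS]; simp [BAct.fa, Act.fa, setFv, CS, pclCS, pclFv, cbar, aC, fP, sP, glj, Ring.goal, Proc.free, Prefix.fvP, pend, Set.mem_union, Set.mem_iUnion] <;> first | decide | (intro x hx; rcases hx with hx | hx | hx | hx | hx | hx | hx | hx | hx <;> first | exact (hx : False).elim | (change x = _ at hx; subst hx; simp [pclFv] <;> decide) | (simp [pclFv] <;> decide))⟩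
  have hfuse : LTS CS env st8
      ⟨(((insert (Sum.inr 1) (∅ ∪ ∅) : Finset Atom) ∪ ((insert (Sum.inr 2) (∅ ∪ ∅) : Finset Atom) ∪ ((insert (Sum.inr 3) (∅ ∪ ∅) : Finset Atom) ∪ ((insert (Sum.inr 4) (∅ ∪ ∅) : Finset Atom) ∪ ((insert (Sum.inr 5) (∅ ∪ ∅) : Finset Atom) ∪ ((insert (Sum.inr 6) (∅ ∪ ∅) : Finset Atom) ∪ ((insert (Sum.inr 7) (∅ ∪ ∅) : Finset Atom) ∪ (∅ : Finset Atom)))))))) ∪ insert (Sum.inr 0) (∅ ∪ ∅)), .fuseA ((({cbar ns 1} ∪ ∅ : Set F) ∪ (({cbar ns 2} ∪ ∅ : Set F) ∪ (({cbar ns 3} ∪ ∅ : Set F) ∪ (({cbar ns 4} ∪ ∅ : Set F) ∪ (({cbar ns 5} ∪ ∅ : Set F) ∪ (({cbar ns 6} ∪ ∅ : Set F) ∪ (({cbar ns 7} ∪ ∅ : Set F) ∪ (∅ : Set F)))))))) ∪ ({cbar ns 0} ∪ ∅ : Set F)) 0 (glj ns 0)⟩ (Proc.par (Proc.par (.con (cbar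 ns 0)) (.const (m4 0).val [Sum.inr 0])) (Proc.par (Proc.par (.con (cbar ns 1)) (pend ns 1)) (Proc.par (Proc.par (.con (cbar ns 2)) (pend ns 2)) (Proc.par (Proc.par (.con (cbar ns 3)) (pend ns 3)) (Proc.par (Proc.par (.con (cbar ns 4)) (pend ns 4)) (Proc.par (Proc.par (.con (cbar ns 5)) (pend ns 5)) (Proc.par (Proc.par (.con (cbar ns 6)) (pend ns 6)) (Proc.par (Proc.par (.con (cbar ns 7)) (pend ns 7)) (Proc.nil : Proc F))))))))) := by
    refine .parFuseR hd0 r1 ?_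
    constructor
    · intro a ha
      fin_cases ha <;>
        exact ⟨by decide, by dsimp only [BAct.fa, Act.fa, setFv, CS, pclCS]; simp [BAct.fa, Act.fa, setFv, CS, pclCS, pclFv, cbar, aC, fP, sP, glj, Ring.goal, Proc.free, Prefix.fvP, pend, Set.mem_union, Set.mem_iUnion] <;> first | decide | (intro x hx; rcases hx with hx | hx | hx | hx | hx | hx | hx | hx | hx <;> first | exact (hx : False).elim | (change x = _ at hx; subst hx; simp [pclFv] <;> decide) | (simp [pclFv] <;> decide)), by dsimp only [BAct.fa, Act.fa, setFv, CS, pclCS]; simp [BAct.fa, Act.fa, setFv, CS, pclCS, pclFv, cbar, aC, fP, sP, glj, Ring.goal, Proc.free, Prefix.fvP, pend, Set.mem_union, Set.mem_iUnion] <;> first | decide | (intro x hx; rcases hx with hx | hx | hx | hx | hx | hx | hx | hx | hx <;> first | exact (hx : False).elim | (change x = _ at hx; subst hx; simp [pclFv] <;> decide) | (simp [pclFv] <;> decide))⟩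
    · intro b hb
      fin_cases hb <;>
        exact ⟨by dsimp only [BAct.fa, Act.fa, setFv, CS, pclCS]; simp [BAct.fa, Act.fa, setFv, CS, pclCS, pclFv, cbar, aC, fP, sP, glj, Ring.goal, Proc.free, Prefix.fvP, pend, Set.mem_union, Set.mem_iUnion] <;> first | decide | (intro x hx; rcases hx with hx | hx | hx | hx | hx | hx | hx | hx | hx <;> first | exact (hx : False).elim | (change x = _ at hx; subst hx; simp [pclFv] <;> decide) | (simp [pclFv] <;> decide)), by dsimp only [BAct.fa, Act.fa, setFv, CS, pclCS]; simp [BAct.fa, Act.fa, setFv, CS, pclCS, pclFv, cbar, aC, fP, sP, glj, Ring.goal, Proc.free, Prefix.fvP, pend, Set.mem_union, Set.mem_iUnion] <;> first | decide | (intro x hx; rcases hx with hx | hx | hx | hx | hx | hx | hx | hx | hx <;> first | exact (hx : False).elim | (change x = _ at hx; subst hx; simp [pclFv] <;> decide) | (simp [pclFv] <;> decide))⟩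
  have hsubC : Cc ns ⊆ ((({cbar ns 1} ∪ ∅ : Set F) ∪ (({cbar ns 2} ∪ ∅ : Set F) ∪ (({cbar ns 3} ∪ ∅ : Set F) ∪ (({cbar ns 4} ∪ ∅ : Set F) ∪ (({cbar ns 5} ∪ ∅ : Set F) ∪ (({cbar ns 6} ∪ ∅ : Set F) ∪ (({cbar ns 7} ∪ ∅ : Set F) ∪ (∅ : Set F)))))))) ∪ ({cbar ns 0} ∪ ∅ : Set F)) := by
    rintro d ⟨j, rfl⟩
    fin_cases j <;> simp
  have hloc : CS.LocMinFusion ((({cbar ns 1} ∪ ∅ : Set F) ∪ (({cbar ns 2} ∪ ∅ : Set F) ∪ (({cbar ns 3} ∪ ∅ : Set F) ∪ (({cbar ns 4} ∪ ∅ : Set F) ∪ (({cbar ns 5} ∪ ∅ : Set F) ∪ (({cbar ns 6} ∪ ∅ : Set F) ∪ (({cbar ns 7} ∪ ∅ : Set F) ∪ (∅ : Set F)))))))) ∪ ({cbar ns 0} ∪ ∅ : Set F)) (Finset.range 8) m (glj ns 0) := by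
    refine ⟨Cc ns, hsubC, ?_⟩
    have h := min8 ns hdist m
    have e : glj ns 0 = goal0 ns := rfl
    rw [e]
    exact h
  have hfr : (Sum.inl m : Atom) ∉ Proc.free CS (Proc.par (Proc.par (.con (cbar ns 0)) (.const (m4 0).val [Sum.inr 0])) (Proc.par (Proc.par (.con (cbar ns 1)) (pend ns 1)) (Proc.par (Proc.par (.con (cbar ns 2)) (pend ns 2)) (Proc.par (Proc.par (.con (cbar ns 3)) (pend ns 3)) (Proc.par (Proc.par (.con (cbar ns 4)) (pend ns 4)) (Proc.par (Proc.par (.con (cbar ns 5)) (pend ns 5)) (Proc.par (Proc.par (.con (cbar ns 6)) (pend ns 6)) (Proc.par (Proc.par (.con (cbar ns 7)) (pend ns 7)) (Proc.nil : Proc F))))))))) ∧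
      (Sum.inl m : Atom) ∉ setFv CS ((({cbar ns 1} ∪ ∅ : Set F) ∪ (({cbar ns 2} ∪ ∅ : Set F) ∪ (({cbar ns 3} ∪ ∅ : Set F) ∪ (({cbar ns 4} ∪ ∅ : Set F) ∪ (({cbar ns 5} ∪ ∅ : Set F) ∪ (({cbar ns 6} ∪ ∅ : Set F) ∪ (({cbar ns 7} ∪ ∅ : Set F) ∪ (∅ : Set F)))))))) ∪ ({cbar ns 0} ∪ ∅ : Set F)) ∧
      (Sum.inl m : Atom) ∉ CS.fv (glj ns 0) ∧
      (Sum.inl m : Atom) ∉ (((insert (Sum.inr 1) (∅ ∪ ∅) : Finset Atom) ∪ ((insert (Sum.inr 2) (∅ ∪ ∅) : Finset Atom) ∪ ((insert (Sum.inr 3) (∅ ∪ ∅) : Finset Atom) ∪ ((insert (Sum.inr 4) (∅ ∪ ∅) : Finset Atom) ∪ ((insert (Sum.inr 5) (∅ ∪ ∅) : Finset Atom) ∪ ((insert (Sum.inr 6) (∅ ∪ ∅) : Finset Atom) ∪ ((insert (Sum.inr 7) (∅ ∪ ∅) : Finset Atom) ∪ (∅ : Finset Atom)))))))) ∪ insert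 (Sum.inr 0) (∅ ∪ ∅)) := by
    refine ⟨?_, ?_, ?_, ?_⟩
    · simp [BAct.fa, Act.fa, setFv, CS, pclCS, pclFv, cbar, aC, fP, sP, glj, Ring.goal, Proc.free, Prefix.fvP, pend, Set.mem_union, Set.mem_iUnion, hm']
    · simp [BAct.fa, Act.fa, setFv, CS, pclCS, pclFv, cbar, aC, fP, sP, glj, Ring.goal, Proc.free, Prefix.fvP, pend, Set.mem_union, Set.mem_iUnion, hm'] <;> (intro x hx; rcases hx with (hx | hx | hx | hx | hx | hx | hx | hx | hx | hx) | hx <;> first | exact (hx : False).elim | (change x = _ at hx; subst hx; simp [pclFv, hm']) | (simp [pclFv, Set.mem_union, Set.mem_setOf_eq, hm']))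
    · simp [BAct.fa, Act.fa, setFv, CS, pclCS, pclFv, cbar, aC, fP, sP, glj, Ring.goal, Proc.free, Prefix.fvP, pend, Set.mem_union, Set.mem_iUnion, hm']
    · simp
  have hx0 : (0 : Var) ∈ Finset.range 8 := by decide
  have hvs8 : ∀ v ∈ Finset.range 8, (Sum.inr v : Atom) ∈ (((insert (Sum.inr 1) (∅ ∪ ∅) : Finset Atom) ∪ ((insert (Sum.inr 2) (∅ ∪ ∅) : Finset Atom) ∪ ((insert (Sum.inr 3) (∅ ∪ ∅) : Finset Atom) ∪ ((insert (Sum.inr 4) (∅ ∪ ∅) : Finset Atom) ∪ ((insert (Sum.inr 5) (∅ ∪ ∅) : Finset Atom) ∪ ((insert (Sum.inr 6) (∅ ∪ ∅) : Finset Atom) ∪ ((insert (Sum.inr 7) (∅ ∪ ∅) : Finset Atom) ∪ (∅ : Finset Atom)))))))) ∪ insert (Sum.inr 0) (∅ ∪ ∅)) := by decide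
  have htau := LTS.closeFuse (env := env) hfuse (Finset.range 8) hx0 hvs8 m hfr hloc
  refine ⟨st8, _, chain, .topTau htau, ?_⟩
  have e1 : ((((insert (Sum.inr 1) (∅ ∪ ∅) : Finset Atom) ∪ ((insert (Sum.inr 2) (∅ ∪ ∅) : Finset Atom) ∪ ((insert (Sum.inr 3) (∅ ∪ ∅) : Finset Atom) ∪ ((insert (Sum.inr 4) (∅ ∪ ∅) : Finset Atom) ∪ ((insert (Sum.inr 5) (∅ ∪ ∅) : Finset Atom) ∪ ((insert (Sum.inr 6) (∅ ∪ ∅) : Finset Atom) ∪ ((insert (Sum.inr 7) (∅ ∪ ∅) : Finset Atom) ∪ (∅ : Finset Atom)))))))) ∪ insert (Sum.inr 0) (∅ ∪ ∅)) \ (Finset.range 8).image (Sum.inr : Var → Atom)) = (∅ : Finset Atom) := by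
    decide
  rw [e1]
  have e2 : (∅ : Finset Atom).toList = [] := Finset.toList_empty
  rw [e2]
  have e3 : delims [Sum.inl m] ((Proc.par (Proc.par (.con (cbar ns 0)) (.const (m4 0).val [Sum.inr 0])) (Proc.par (Proc.par (.con (cbar ns 1)) (pend ns 1)) (Proc.par (Proc.par (.con (cbar ns 2)) (pend ns 2)) (Proc.par (Proc.par (.con (cbar ns 3)) (pend ns 3)) (Proc.par (Proc.par (.con (cbar ns 4)) (pend ns 4)) (Proc.par (Proc.par (.con (cbar ns 5)) (pend ns 5)) (Proc.par (Proc.par (.con (cbar ns 6)) (pend ns 6)) (Proc.par (Proc.par (.con (cbar ns 7)) (pend ns 7)) (Proc.nil : Proc F))))))))).subst CS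
      (fuseSubst (Finset.range 8) m)) = loop8After ns m := rfl
  erw [e3]
  exact .refl _
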